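/- arXiv:2508.19054 — 3 statements merged into one kernel-verified Lean document; each statement's English description precedes it below -/
import Mathlib

section
/- (Lyapunov decrease of the optimal value along the closed loop.) Under Condition 1 and Assumption SA1, let α ∈ (0,1) satisfy αP̄ ⪯ Q_i for all i ∈ 𝕄 and α₀ > 0 satisfy α₀(P̄ − P̲) ⪯ Q_i for all i ∈ 𝕄. Then for every integer d > 1, every x ∈ ℝⁿ, and every υ ∈ F_d(x), V*(υ) ≤ (1 − α + (1−α)^{d−1}/α₀)·V*(x), where V* is real-valued (finite) by SA1. -/
open Matrix Filter
open scoped ENNReal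

/-- Data of a switched linear-quadratic problem with `M` modes,
state dimension `n` and continuous-input dimension `m`. -/
structure SwitchedLQR (n m M : ℕ) where
  A : Fin M → Matrix (Fin n) (Fin n) ℝ
  B : Fin M → Matrix (Fin n) (Fin m) ℝ
  Q : Fin M → Matrix (Fin n) (Fin n) ℝ
  R : Fin M → Matrix (Fin m) (Fin m) ℝ

namespace SwitchedLQR

variable {n m M : ℕ}

/-- Stage cost `ℓ(x,u,i) = xᵀQᵢx + uᵀRᵢu`. -/
def ell (S : SwitchedLQR n m M) (x : Fin n → ℝ) (u : Fin m → ℝ) (i : Fin M) : ℝ :=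
  x ⬝ᵥ ((S.Q i) *ᵥ x) + u ⬝ᵥ ((S.R i) *ᵥ u)

/-- Riccati operator `𝓡ᵢ(P)`. -/
noncomputable def Ric (S : SwitchedLQR n m M) (i : Fin M)
    (P : Matrix (Fin n) (Fin n) ℝ) : Matrix (Fin n) (Fin n) ℝ :=
  S.Q i + (S.A i)ᵀ * P * S.A i -
    (S.A i)ᵀ * P * S.B i * (S.R i + (S.B i)ᵀ * P * S.B i)⁻¹ * ((S.B i)ᵀ * P * S.A i)

/-- `P_𝐢 = 𝓡_{i₀}(𝓡_{i₁}(⋯𝓡_{i_{d-1}}(P̲)⋯))` for a finite mode sequence `𝐢`. -/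
noncomputable def Pseq (S : SwitchedLQR n m M) (Pund : Matrix (Fin n) (Fin n) ℝ)
    (l : List (Fin M)) : Matrix (Fin n) (Fin n) ℝ :=
  l.foldr S.Ric Pund

/-- Solution `φ(k,x,u,i)` of the switched linear system. -/
def phi (S : SwitchedLQR n m M) (x : Fin n → ℝ) (u : ℕ → Fin m → ℝ) (is : ℕ → Fin M) :
    ℕ → Fin n → ℝ
  | 0 => x
  | k + 1 => S.A (is k) *ᵥ (phi S x u is k) + S.B (is k) *ᵥ (u k)

/-- Finite-horizon cost `J_d` with terminal cost matrix `P̲`. -/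
noncomputable def Jd (S : SwitchedLQR n m M) (Pund : Matrix (Fin n) (Fin n) ℝ) (d : ℕ)
    (x : Fin n → ℝ) (u : ℕ → Fin m → ℝ) (is : ℕ → Fin M) : ℝ :=
  (∑ k ∈ Finset.range d, S.ell (S.phi x u is k) (u k) (is k)) +
    (S.phi x u is d) ⬝ᵥ (Pund *ᵥ (S.phi x u is d))

/-- Infinite-horizon cost `J(x,u,i) ∈ [0,∞]`. -/
noncomputable def Jinf (S : SwitchedLQR n m M) (x : Fin n → ℝ) (u : ℕ → Fin m → ℝ)
    (is : ℕ → Fin M) : ℝ≥0∞ :=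
  ∑' k : ℕ, ENNReal.ofReal (S.ell (S.phi x u is k) (u k) (is k))

/-- Optimal value function `V*(x)`. -/
noncomputable def Vstar (S : SwitchedLQR n m M) (x : Fin n → ℝ) : ℝ≥0∞ :=
  ⨅ (u : ℕ → Fin m → ℝ) (is : ℕ → Fin M), S.Jinf x u is

/-- `V*_d(x)`: minimum over length-`d` mode sequences `𝐢` of `xᵀP_𝐢x`. -/
noncomputable def Vd (S : SwitchedLQR n m M) (Pund : Matrix (Fin n) (Fin n) ℝ) (d : ℕ)
    (x : Fin n → ℝ) : ℝ :=
  sInf {r : ℝ | ∃ l : List (Fin M), l.length = d ∧ r = x ⬝ᵥ ((S.Pseq Pund l) *ᵥ x)}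

/-- Condition 1: the LMI block matrix is positive semi-definite for every mode. -/
def Cond1 (S : SwitchedLQR n m M) (Pund : Matrix (Fin n) (Fin n) ℝ) : Prop :=
  ∀ i : Fin M,
    (Matrix.fromBlocks
      ((S.A i)ᵀ * Pund * S.A i - Pund + S.Q i) ((S.A i)ᵀ * Pund * S.B i)
      ((S.B i)ᵀ * Pund * S.A i) (S.R i + (S.B i)ᵀ * Pund * S.B i)).PosSemidef

/-- Assumption SA1. -/
def SA1 (S : SwitchedLQR n m M) (Pbar : Matrix (Fin n) (Fin n) ℝ) : Prop :=
  Pbar.PosDef ∧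
    ∀ x : Fin n → ℝ, ∃ (u : ℕ → Fin m → ℝ) (is : ℕ → Fin M),
      S.Jinf x u is = S.Vstar x ∧ S.Vstar x ≤ ENNReal.ofReal (x ⬝ᵥ (Pbar *ᵥ x))

/-- `H*_d(x)`. -/
noncomputable def HStar (S : SwitchedLQR n m M) (Pund : Matrix (Fin n) (Fin n) ℝ) (d : ℕ)
    (x : Fin n → ℝ) : Set ((Fin m → ℝ) × Fin M) :=
  {p | S.Vd Pund d x =
        S.ell x p.1 p.2 + S.Vd Pund (d - 1) (S.A p.2 *ᵥ x + S.B p.2 *ᵥ p.1)}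

/-- `F_d(x)`. -/
noncomputable def Fd (S : SwitchedLQR n m M) (Pund : Matrix (Fin n) (Fin n) ℝ) (d : ℕ)
    (x : Fin n → ℝ) : Set (Fin n → ℝ) :=
  {y | ∃ p ∈ S.HStar Pund d x, y = S.A p.2 *ᵥ x + S.B p.2 *ᵥ p.1}

end SwitchedLQR
section Helpers

open Matrix

variable {n m : ℕ}

/-- quadratic form -/
def qf {ι : Type*} [Fintype ι] (P : Matrix ι ι ℝ) (x : ι → ℝ) : ℝ := x ⬝ᵥ (P *ᵥ x)

lemma dot_mulVec_left {ι κ : Type*} [Fintype ι] [Fintype κ] (K : Matrix ι κ ℝ)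
    (x : κ → ℝ) (w : ι → ℝ) : (K *ᵥ x) ⬝ᵥ w = x ⬝ᵥ (Kᵀ *ᵥ w) := by
  rw [dotProduct_comm, dotProduct_mulVec, ← Matrix.mulVec_transpose, dotProduct_comm]

lemma qf_nonneg {ι : Type*} [Fintype ι] {P : Matrix ι ι ℝ} (hP : P.PosSemidef)
    (x : ι → ℝ) : 0 ≤ qf P x := by
  simpa [qf] using hP.dotProduct_mulVec_nonneg x

lemma qf_sub_sub {ι : Type*} [Fintype ι] (P Q : Matrix ι ι ℝ) (x : ι → ℝ) :
    qf (P - Q) x = qf P x - qf Q x := by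
  simp [qf, sub_mulVec, dotProduct_sub]

lemma qf_smul {ι : Type*} [Fintype ι] (c : ℝ) (P : Matrix ι ι ℝ) (x : ι → ℝ) :
    qf (c • P) x = c * qf P x := by
  simp [qf, smul_mulVec, dotProduct_smul]

lemma transpose_eq_self_of_hermitian {ι : Type*} [Fintype ι] {P : Matrix ι ι ℝ}
    (hP : P.IsHermitian) : Pᵀ = P := by
  have := hP; rwa [Matrix.IsHermitian, Matrix.conjTranspose_eq_transpose_of_trivial] at this

lemma psd_BtPB {P : Matrix (Fin n) (Fin n) ℝ} (hP : P.PosSemidef)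
    (B : Matrix (Fin n) (Fin m) ℝ) : (Bᵀ * P * B).PosSemidef := by
  have := hP.conjTranspose_mul_mul_same B
  rwa [Matrix.conjTranspose_eq_transpose_of_trivial] at this

/-- completion of squares for the Riccati step -/
lemma completion (A : Matrix (Fin n) (Fin n) ℝ) (B : Matrix (Fin n) (Fin m) ℝ)
    (Q : Matrix (Fin n) (Fin n) ℝ) (R : Matrix (Fin m) (Fin m) ℝ)
    (P : Matrix (Fin n) (Fin n) ℝ) (hP : P.PosSemidef) (hR : R.PosDef)
    (x : Fin n → ℝ) (u : Fin m → ℝ) :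
    qf Q x + qf R u + qf P (A *ᵥ x + B *ᵥ u) =
      qf (Q + Aᵀ * P * A - Aᵀ * P * B * (R + Bᵀ * P * B)⁻¹ * (Bᵀ * P * A)) x
        + qf (R + Bᵀ * P * B) (u + ((R + Bᵀ * P * B)⁻¹ * (Bᵀ * P * A)) *ᵥ x) := by
  have hPT : Pᵀ = P := transpose_eq_self_of_hermitian hP.isHermitian
  set Sm := R + Bᵀ * P * B with hSm
  have hSmPD : Sm.PosDef := hR.add_posSemidef (psd_BtPB hP B)
  have hSmT : Smᵀ = Sm := transpose_eq_self_of_hermitian hSmPD.isHermitian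
  have hdet : IsUnit Sm.det := hSmPD.det_pos.ne'.isUnit
  have hSmK : Sm * ((Sm)⁻¹ * (Bᵀ * P * A)) = Bᵀ * P * A := by
    rw [← Matrix.mul_assoc, Matrix.mul_nonsing_inv _ hdet, Matrix.one_mul]
  have hinvT : (Sm⁻¹)ᵀ = Sm⁻¹ := by rw [Matrix.transpose_nonsing_inv, hSmT]
  simp only [qf, mulVec_add, add_mulVec, sub_mulVec, dotProduct_add, add_dotProduct,
    dotProduct_sub, mulVec_mulVec, dot_mulVec_left, transpose_mul, transpose_transpose,
    hPT, hinvT, hSmT]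
  rw [show Sm * (Sm⁻¹ * (Bᵀ * P * A)) = Bᵀ * P * A from hSmK]
  have hinvS : Sm⁻¹ * Sm = 1 := Matrix.nonsing_inv_mul _ hdet
  have hinvS' : (R + Bᵀ * (P * B))⁻¹ * (R + Bᵀ * (P * B)) = 1 := by
    simpa only [hSm, Matrix.mul_assoc] using hinvS
  simp only [Matrix.mul_assoc, hSm, add_mulVec, dotProduct_add, hinvS', Matrix.mul_one]
  ring
end Helpers
section Ric

open Matrix SwitchedLQR

variable {n m M : ℕ} (S : SwitchedLQR n m M)

/-- Riccati feedback input -/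
noncomputable def fb (i : Fin M) (P : Matrix (Fin n) (Fin n) ℝ) (x : Fin n → ℝ) : Fin m → ℝ :=
  -(((S.R i + (S.B i)ᵀ * P * S.B i)⁻¹ * ((S.B i)ᵀ * P * S.A i)) *ᵥ x)

lemma ell_eq_qf (x : Fin n → ℝ) (u : Fin m → ℝ) (i : Fin M) :
    S.ell x u i = qf (S.Q i) x + qf (S.R i) u := rfl

lemma ric_le {P : Matrix (Fin n) (Fin n) ℝ} (hP : P.PosSemidef)
    (hR : ∀ i, (S.R i).PosDef) (i : Fin M) (x : Fin n → ℝ) (u : Fin m → ℝ) :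
    qf (S.Ric i P) x ≤ S.ell x u i + qf P (S.A i *ᵥ x + S.B i *ᵥ u) := by
  rw [ell_eq_qf, completion (S.A i) (S.B i) (S.Q i) (S.R i) P hP (hR i)]
  have hSm : (S.R i + (S.B i)ᵀ * P * S.B i).PosSemidef :=
    ((hR i).add_posSemidef (psd_BtPB hP (S.B i))).posSemidef
  have := qf_nonneg hSm (u + ((S.R i + (S.B i)ᵀ * P * S.B i)⁻¹ * ((S.B i)ᵀ * P * S.A i)) *ᵥ x)
  rw [SwitchedLQR.Ric]
  linarith

lemma ric_eq {P : Matrix (Fin n) (Fin n) ℝ} (hP : P.PosSemidef)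
    (hR : ∀ i, (S.R i).PosDef) (i : Fin M) (x : Fin n → ℝ) :
    qf (S.Ric i P) x =
      S.ell x (fb S i P x) i + qf P (S.A i *ᵥ x + S.B i *ᵥ (fb S i P x)) := by
  rw [ell_eq_qf, completion (S.A i) (S.B i) (S.Q i) (S.R i) P hP (hR i)]
  have : fb S i P x + ((S.R i + (S.B i)ᵀ * P * S.B i)⁻¹ * ((S.B i)ᵀ * P * S.A i)) *ᵥ x = 0 := by
    simp [fb]
  rw [SwitchedLQR.Ric, this]
  simp [qf]

lemma ric_psd (hQ : ∀ i, (S.Q i).PosDef) (hR : ∀ i, (S.R i).PosDef)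
    {P : Matrix (Fin n) (Fin n) ℝ} (hP : P.PosSemidef) (i : Fin M) :
    (S.Ric i P).PosSemidef := by
  have hPT : Pᵀ = P := transpose_eq_self_of_hermitian hP.isHermitian
  have hQT : (S.Q i)ᵀ = S.Q i := transpose_eq_self_of_hermitian (hQ i).isHermitian
  refine PosSemidef.of_dotProduct_mulVec_nonneg ?_ ?_
  · rw [Matrix.IsHermitian, Matrix.conjTranspose_eq_transpose_of_trivial]
    have hSmPD : (S.R i + (S.B i)ᵀ * P * S.B i).PosDef :=
      (hR i).add_posSemidef (psd_BtPB hP (S.B i))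
    have hRT : (S.R i)ᵀ = S.R i := transpose_eq_self_of_hermitian (hR i).isHermitian
    have hSmT : (S.R i + (S.B i)ᵀ * (P * S.B i))ᵀ = S.R i + (S.B i)ᵀ * (P * S.B i) := by
      simp only [transpose_add, transpose_mul, transpose_transpose, hPT, hRT, Matrix.mul_assoc]
    have hinvT : ((S.R i + (S.B i)ᵀ * (P * S.B i))⁻¹)ᵀ = (S.R i + (S.B i)ᵀ * (P * S.B i))⁻¹ := by
      rw [Matrix.transpose_nonsing_inv, hSmT]
    rw [SwitchedLQR.Ric]
    simp only [transpose_sub, transpose_add, transpose_mul, transpose_transpose, hPT, hQT,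
      hinvT, Matrix.mul_assoc]
  · intro x
    have h := ric_eq S hP hR i x
    have h1 : 0 ≤ S.ell x (fb S i P x) i := by
      rw [ell_eq_qf]
      exact add_nonneg (qf_nonneg (hQ i).posSemidef _) (qf_nonneg (hR i).posSemidef _)
    have h2 : 0 ≤ qf P (S.A i *ᵥ x + S.B i *ᵥ (fb S i P x)) := qf_nonneg hP _
    have : (0:ℝ) ≤ qf (S.Ric i P) x := by rw [h]; positivity
    simpa [qf] using this

lemma pseq_psd (hQ : ∀ i, (S.Q i).PosDef) (hR : ∀ i, (S.R i).PosDef)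
    {Pund : Matrix (Fin n) (Fin n) ℝ} (hPund : Pund.PosSemidef) (l : List (Fin M)) :
    (S.Pseq Pund l).PosSemidef := by
  induction l with
  | nil => exact hPund
  | cons i l ih => exact ric_psd S hQ hR ih i

end Ric
section VdFacts

open Matrix SwitchedLQR

variable {n m M : ℕ} (S : SwitchedLQR n m M)

lemma vd_eq_sInf (Pund : Matrix (Fin n) (Fin n) ℝ) (d : ℕ) (x : Fin n → ℝ) :
    S.Vd Pund d x =
      sInf {r : ℝ | ∃ l : List (Fin M), l.length = d ∧ r = qf (S.Pseq Pund l) x} := rfl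

lemma vdset_eq_range (Pund : Matrix (Fin n) (Fin n) ℝ) (d : ℕ) (x : Fin n → ℝ) :
    {r : ℝ | ∃ l : List (Fin M), l.length = d ∧ r = qf (S.Pseq Pund l) x} =
      Set.range (fun v : Fin d → Fin M => qf (S.Pseq Pund (List.ofFn v)) x) := by
  ext r
  constructor
  · rintro ⟨l, hl, rfl⟩
    subst hl
    exact ⟨l.get, by simp [List.ofFn_get]⟩
  · rintro ⟨v, rfl⟩
    exact ⟨List.ofFn v, by simp, rfl⟩

lemma vdset_bdd (hQ : ∀ i, (S.Q i).PosDef) (hR : ∀ i, (S.R i).PosDef)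
    {Pund : Matrix (Fin n) (Fin n) ℝ} (hPund : Pund.PosSemidef) (d : ℕ) (x : Fin n → ℝ) :
    ∀ r ∈ {r : ℝ | ∃ l : List (Fin M), l.length = d ∧ r = qf (S.Pseq Pund l) x}, 0 ≤ r := by
  rintro r ⟨l, hl, rfl⟩
  exact qf_nonneg (pseq_psd S hQ hR hPund l) x

lemma vd_le (hQ : ∀ i, (S.Q i).PosDef) (hR : ∀ i, (S.R i).PosDef)
    {Pund : Matrix (Fin n) (Fin n) ℝ} (hPund : Pund.PosSemidef) {d : ℕ} (x : Fin n → ℝ)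
    {l : List (Fin M)} (hl : l.length = d) :
    S.Vd Pund d x ≤ qf (S.Pseq Pund l) x := by
  rw [vd_eq_sInf]
  exact csInf_le ⟨0, fun r hr => vdset_bdd S hQ hR hPund d x r hr⟩ ⟨l, hl, rfl⟩

lemma vd_mem (hM : 0 < M) (Pund : Matrix (Fin n) (Fin n) ℝ) (d : ℕ) (x : Fin n → ℝ) :
    ∃ l : List (Fin M), l.length = d ∧ S.Vd Pund d x = qf (S.Pseq Pund l) x := by
  have hfin : {r : ℝ | ∃ l : List (Fin M), l.length = d ∧ r = qf (S.Pseq Pund l) x}.Finite := by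
    rw [vdset_eq_range]; exact Set.finite_range _
  have hne : {r : ℝ | ∃ l : List (Fin M), l.length = d ∧ r = qf (S.Pseq Pund l) x}.Nonempty :=
    ⟨_, ⟨List.replicate d ⟨0, hM⟩, by simp, rfl⟩⟩
  have := hne.csInf_mem hfin
  exact this

lemma vd_nonneg (hM : 0 < M) (hQ : ∀ i, (S.Q i).PosDef) (hR : ∀ i, (S.R i).PosDef)
    {Pund : Matrix (Fin n) (Fin n) ℝ} (hPund : Pund.PosSemidef) (d : ℕ) (x : Fin n → ℝ) :
    0 ≤ S.Vd Pund d x := by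
  obtain ⟨l, hl, h⟩ := vd_mem S hM Pund d x
  rw [h]; exact qf_nonneg (pseq_psd S hQ hR hPund l) x

lemma vd_zero (Pund : Matrix (Fin n) (Fin n) ℝ) (x : Fin n → ℝ) :
    S.Vd Pund 0 x = qf Pund x := by
  rw [vd_eq_sInf]
  have : {r : ℝ | ∃ l : List (Fin M), l.length = 0 ∧ r = qf (S.Pseq Pund l) x}
      = {qf Pund x} := by
    ext r; simp only [Set.mem_setOf_eq, Set.mem_singleton_iff, List.length_eq_zero_iff]
    constructor
    · rintro ⟨l, rfl, rfl⟩; rfl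
    · rintro rfl; exact ⟨[], rfl, rfl⟩
  rw [this, csInf_singleton]

/-- Bellman inequality -/
lemma vd_le_step (hM : 0 < M) (hQ : ∀ i, (S.Q i).PosDef) (hR : ∀ i, (S.R i).PosDef)
    {Pund : Matrix (Fin n) (Fin n) ℝ} (hPund : Pund.PosSemidef) (d : ℕ) (x : Fin n → ℝ)
    (u : Fin m → ℝ) (i : Fin M) :
    S.Vd Pund (d+1) x ≤ S.ell x u i + S.Vd Pund d (S.A i *ᵥ x + S.B i *ᵥ u) := by
  obtain ⟨l, hl, h⟩ := vd_mem S hM Pund d (S.A i *ᵥ x + S.B i *ᵥ u)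
  calc S.Vd Pund (d+1) x ≤ qf (S.Pseq Pund (i :: l)) x :=
        vd_le S hQ hR hPund x (by simp [hl])
    _ = qf (S.Ric i (S.Pseq Pund l)) x := rfl
    _ ≤ S.ell x u i + qf (S.Pseq Pund l) (S.A i *ᵥ x + S.B i *ᵥ u) :=
        ric_le S (pseq_psd S hQ hR hPund l) hR i x u
    _ = S.ell x u i + S.Vd Pund d (S.A i *ᵥ x + S.B i *ᵥ u) := by rw [h]

/-- existence of an optimal first step for `Vd` -/
lemma vd_step_exists (hM : 0 < M) (hQ : ∀ i, (S.Q i).PosDef) (hR : ∀ i, (S.R i).PosDef)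
    {Pund : Matrix (Fin n) (Fin n) ℝ} (hPund : Pund.PosSemidef) (d : ℕ) (x : Fin n → ℝ) :
    ∃ (u : Fin m → ℝ) (i : Fin M),
      S.Vd Pund (d+1) x = S.ell x u i + S.Vd Pund d (S.A i *ᵥ x + S.B i *ᵥ u) := by
  obtain ⟨l, hl, h⟩ := vd_mem S hM Pund (d+1) x
  match l, hl with
  | i :: l', hl =>
    have hl' : l'.length = d := by simpa using hl
    refine ⟨fb S i (S.Pseq Pund l') x, i, le_antisymm (vd_le_step S hM hQ hR hPund d x _ i) ?_⟩
    have heq : qf (S.Pseq Pund (i :: l')) x = S.ell x (fb S i (S.Pseq Pund l') x) i +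
        qf (S.Pseq Pund l') (S.A i *ᵥ x + S.B i *ᵥ (fb S i (S.Pseq Pund l') x)) :=
      ric_eq S (pseq_psd S hQ hR hPund l') hR i x
    have hle : S.Vd Pund d (S.A i *ᵥ x + S.B i *ᵥ (fb S i (S.Pseq Pund l') x)) ≤
        qf (S.Pseq Pund l') (S.A i *ᵥ x + S.B i *ᵥ (fb S i (S.Pseq Pund l') x)) :=
      vd_le S hQ hR hPund _ hl'
    rw [h, heq]
    linarith

/-- consequence of Condition 1 -/
lemma cond1_qf {Pund : Matrix (Fin n) (Fin n) ℝ} (hPund : Pund.PosSemidef)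
    (hC : S.Cond1 Pund) (x : Fin n → ℝ) (u : Fin m → ℝ) (i : Fin M) :
    qf Pund x ≤ S.ell x u i + qf Pund (S.A i *ᵥ x + S.B i *ᵥ u) := by
  have hPT : Pundᵀ = Pund := transpose_eq_self_of_hermitian hPund.isHermitian
  have h := (hC i).dotProduct_mulVec_nonneg (Sum.elim x u)
  rw [show (star (Sum.elim x u) : Fin n ⊕ Fin m → ℝ) = Sum.elim x u from rfl] at h
  rw [Matrix.fromBlocks_mulVec, sumElim_dotProduct_sumElim] at h
  simp only [ell_eq_qf, qf, mulVec_add, add_mulVec, sub_mulVec, dotProduct_add,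
    add_dotProduct, dotProduct_sub, sub_dotProduct, mulVec_mulVec, dot_mulVec_left,
    Sum.elim_comp_inl, Sum.elim_comp_inr,
    transpose_mul, transpose_transpose, hPT, Matrix.mul_assoc] at h ⊢
  linarith

end VdFacts
section Traj

open Matrix SwitchedLQR

variable {n m M : ℕ} (S : SwitchedLQR n m M)

lemma ell_nonneg (hQ : ∀ i, (S.Q i).PosDef) (hR : ∀ i, (S.R i).PosDef)
    (x : Fin n → ℝ) (u : Fin m → ℝ) (i : Fin M) : 0 ≤ S.ell x u i :=
  add_nonneg (qf_nonneg (hQ i).posSemidef x) (qf_nonneg (hR i).posSemidef u)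

lemma phi_zero (x : Fin n → ℝ) (u : ℕ → Fin m → ℝ) (is : ℕ → Fin M) :
    S.phi x u is 0 = x := rfl

lemma phi_succ (x : Fin n → ℝ) (u : ℕ → Fin m → ℝ) (is : ℕ → Fin M) (k : ℕ) :
    S.phi x u is (k + 1) = S.A (is k) *ᵥ (S.phi x u is k) + S.B (is k) *ᵥ (u k) := rfl

lemma phi_shift (x : Fin n → ℝ) (u : ℕ → Fin m → ℝ) (is : ℕ → Fin M) (N k : ℕ) :
    S.phi x u is (N + k) =
      S.phi (S.phi x u is N) (fun j => u (N + j)) (fun j => is (N + j)) k := by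
  induction k with
  | zero => rfl
  | succ k ih => rw [← Nat.add_assoc, phi_succ, phi_succ, ih]

lemma my_split (f : ℕ → ℝ≥0∞) (N : ℕ) :
    (∑ k ∈ Finset.range N, f k) + ∑' k, f (k + N) = ∑' k, f k := by
  induction N with
  | zero => simp
  | succ N ih =>
    have h2 : ∑' k, f (k + N) = f N + ∑' k, f (k + (N + 1)) := by
      rw [tsum_eq_zero_add' ENNReal.summable]
      congr 1
      · simp
      · apply tsum_congr; intro k; congr 1; omega
    rw [Finset.sum_range_succ, ← ih, h2]
    ring

lemma jinf_split (x : Fin n → ℝ) (u : ℕ → Fin m → ℝ) (is : ℕ → Fin M) (N : ℕ) :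
    S.Jinf x u is =
      (∑ k ∈ Finset.range N, ENNReal.ofReal (S.ell (S.phi x u is k) (u k) (is k))) +
        S.Jinf (S.phi x u is N) (fun j => u (N + j)) (fun j => is (N + j)) := by
  rw [SwitchedLQR.Jinf, ← my_split (fun k => ENNReal.ofReal (S.ell (S.phi x u is k) (u k) (is k))) N]
  congr 1
  rw [SwitchedLQR.Jinf]
  apply tsum_congr
  intro k
  rw [Nat.add_comm k N, phi_shift]

lemma vstar_le_jinf (x : Fin n → ℝ) (u : ℕ → Fin m → ℝ) (is : ℕ → Fin M) :
    S.Vstar x ≤ S.Jinf x u is := by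
  unfold SwitchedLQR.Vstar; exact iInf_le_of_le u (iInf_le _ is)

lemma vstar_step (x : Fin n → ℝ) (u : Fin m → ℝ) (i : Fin M) :
    S.Vstar x ≤ ENNReal.ofReal (S.ell x u i) + S.Vstar (S.A i *ᵥ x + S.B i *ᵥ u) := by
  have hrhs : ENNReal.ofReal (S.ell x u i) + S.Vstar (S.A i *ᵥ x + S.B i *ᵥ u) =
      ⨅ (u' : ℕ → Fin m → ℝ) (is' : ℕ → Fin M),
        (ENNReal.ofReal (S.ell x u i) + S.Jinf (S.A i *ᵥ x + S.B i *ᵥ u) u' is') := by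
    rw [SwitchedLQR.Vstar, ENNReal.add_iInf]
    exact iInf_congr fun u' => ENNReal.add_iInf
  rw [hrhs]
  refine le_iInf fun u' => le_iInf fun is' => ?_
  have huc : ∀ j : ℕ, (fun k : ℕ => if k = 0 then u else u' (k - 1)) (1 + j) = u' j := by
    intro j; simp [Nat.add_comm 1 j]
  have hisc : ∀ j : ℕ, (fun k : ℕ => if k = 0 then i else is' (k - 1)) (1 + j) = is' j := by
    intro j; simp [Nat.add_comm 1 j]
  refine le_trans (vstar_le_jinf S x
    (fun k => if k = 0 then u else u' (k - 1)) (fun k => if k = 0 then i else is' (k - 1))) ?_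
  rw [jinf_split S x _ _ 1]
  apply add_le_add
  · simp [phi_succ, phi_zero]
  · apply le_of_eq
    have e1 : S.phi x (fun k => if k = 0 then u else u' (k - 1))
        (fun k => if k = 0 then i else is' (k - 1)) 1 = S.A i *ᵥ x + S.B i *ᵥ u := by
      simp [phi_succ, phi_zero]
    rw [e1, show (fun j => (fun k : ℕ => if k = 0 then u else u' (k - 1)) (1 + j)) = u'
        from funext huc,
      show (fun j => (fun k : ℕ => if k = 0 then i else is' (k - 1)) (1 + j)) = is'
        from funext hisc]

lemma jd_split (Pund : Matrix (Fin n) (Fin n) ℝ) (x : Fin n → ℝ)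
    (u : ℕ → Fin m → ℝ) (is : ℕ → Fin M) (N : ℕ) :
    S.Jd Pund (N + 1) x u is =
      S.ell x (u 0) (is 0) +
        S.Jd Pund N (S.phi x u is 1) (fun j => u (1 + j)) (fun j => is (1 + j)) := by
  rw [SwitchedLQR.Jd, SwitchedLQR.Jd, Finset.sum_range_succ']
  have hterm : S.phi x u is (N + 1) =
      S.phi (S.phi x u is 1) (fun j => u (1 + j)) (fun j => is (1 + j)) N := by
    rw [Nat.add_comm N 1, phi_shift]
  have hsum : ∑ k ∈ Finset.range N, S.ell (S.phi x u is (k + 1)) (u (k + 1)) (is (k + 1)) =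
      ∑ k ∈ Finset.range N,
        S.ell (S.phi (S.phi x u is 1) (fun j => u (1 + j)) (fun j => is (1 + j)) k)
          ((fun j => u (1 + j)) k) ((fun j => is (1 + j)) k) := by
    refine Finset.sum_congr rfl fun k _ => ?_
    rw [show k + 1 = 1 + k from Nat.add_comm k 1, phi_shift]
  rw [hsum, hterm, phi_zero]
  ring

lemma vd_le_jd (hM : 0 < M) (hQ : ∀ i, (S.Q i).PosDef) (hR : ∀ i, (S.R i).PosDef)
    {Pund : Matrix (Fin n) (Fin n) ℝ} (hPund : Pund.PosSemidef) (N : ℕ) :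
    ∀ (x : Fin n → ℝ) (u : ℕ → Fin m → ℝ) (is : ℕ → Fin M),
      S.Vd Pund N x ≤ S.Jd Pund N x u is := by
  induction N with
  | zero =>
    intro x u is
    rw [vd_zero, SwitchedLQR.Jd]
    simp [qf, phi_zero]
  | succ N ih =>
    intro x u is
    rw [jd_split]
    calc S.Vd Pund (N + 1) x ≤
        S.ell x (u 0) (is 0) + S.Vd Pund N (S.A (is 0) *ᵥ x + S.B (is 0) *ᵥ (u 0)) :=
          vd_le_step S hM hQ hR hPund N x (u 0) (is 0)
      _ ≤ _ := by
          have h1 : S.phi x u is 1 = S.A (is 0) *ᵥ x + S.B (is 0) *ᵥ (u 0) := by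
            rw [phi_succ, phi_zero]
          rw [h1]
          exact add_le_add_right (ih _ _ _) _

end Traj
section Analysis

open Matrix SwitchedLQR Filter

variable {n m M : ℕ} (S : SwitchedLQR n m M)

lemma qf_smul_vec {ι : Type*} [Fintype ι] (P : Matrix ι ι ℝ) (t : ℝ) (v : ι → ℝ) :
    qf P (t • v) = t ^ 2 * qf P v := by
  simp [qf, Matrix.mulVec_smul, dotProduct_smul, smul_dotProduct, smul_eq_mul]
  ring

lemma qf_continuous {ι : Type*} [Fintype ι] (P : Matrix ι ι ℝ) :
    Continuous (fun y : ι → ℝ => qf P y) := by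
  simp only [qf, dotProduct, Matrix.mulVec]
  exact continuous_finset_sum _ fun i _ => (continuous_apply i).mul
    (continuous_finset_sum _ fun j _ => continuous_const.mul (continuous_apply j))

lemma posdef_lower {N : ℕ} (hN : 0 < N) {Q : Matrix (Fin N) (Fin N) ℝ} (hQ : Q.PosDef) :
    ∃ c > 0, ∀ y : Fin N → ℝ, c * ‖y‖ ^ 2 ≤ qf Q y := by
  haveI : Nonempty (Fin N) := ⟨⟨0, hN⟩⟩
  have hsc : IsCompact (Metric.sphere (0 : Fin N → ℝ) 1) := isCompact_sphere 0 1
  have hsne : (Metric.sphere (0 : Fin N → ℝ) 1).Nonempty := by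
    refine ⟨fun _ => 1, ?_⟩
    rw [mem_sphere_zero_iff_norm]
    simp
  obtain ⟨w, hw, hwmin⟩ := hsc.exists_isMinOn hsne (qf_continuous Q).continuousOn
  rw [mem_sphere_zero_iff_norm] at hw
  have hw0 : w ≠ 0 := fun h => by simp [h] at hw
  refine ⟨qf Q w, by simpa [qf] using hQ.dotProduct_mulVec_pos hw0, fun y => ?_⟩
  rcases eq_or_ne y 0 with rfl | hy
  · simp [qf]
  · have hny : (0:ℝ) < ‖y‖ := norm_pos_iff.2 hy
    have hunit : ‖y‖⁻¹ • y ∈ Metric.sphere (0 : Fin N → ℝ) 1 := by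
      rw [mem_sphere_zero_iff_norm, norm_smul]
      simp [abs_of_pos (inv_pos.2 hny), inv_mul_cancel₀ hny.ne']
    have h1 : qf Q w ≤ qf Q (‖y‖⁻¹ • y) := hwmin hunit
    have h2 : qf Q (‖y‖⁻¹ • y) = (‖y‖⁻¹) ^ 2 * qf Q y := qf_smul_vec Q _ y
    rw [h2] at h1
    have := mul_le_mul_of_nonneg_left h1 (le_of_lt (pow_pos hny 2))
    calc qf Q w * ‖y‖ ^ 2 = ‖y‖ ^ 2 * qf Q w := by ring
      _ ≤ ‖y‖ ^ 2 * ((‖y‖⁻¹) ^ 2 * qf Q y) := this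
      _ = qf Q y := by
          field_simp
    
lemma qf_abs_le {ι : Type*} [Fintype ι] (P : Matrix ι ι ℝ) (y : ι → ℝ) :
    |qf P y| ≤ (∑ i, ∑ j, |P i j|) * ‖y‖ ^ 2 := by
  have h1 : |qf P y| ≤ ∑ i, ∑ j, |P i j| * (‖y‖ * ‖y‖) := by
    rw [qf, dotProduct]
    refine le_trans (Finset.abs_sum_le_sum_abs _ _) (Finset.sum_le_sum fun i _ => ?_)
    rw [Matrix.mulVec, dotProduct, Finset.mul_sum]
    refine le_trans (Finset.abs_sum_le_sum_abs _ _) (Finset.sum_le_sum fun j _ => ?_)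
    rw [abs_mul, abs_mul, mul_comm |y i|]
    have hyi : |y i| ≤ ‖y‖ := by simpa using norm_le_pi_norm y i
    have hyj : |y j| ≤ ‖y‖ := by simpa using norm_le_pi_norm y j
    calc |P i j| * |y j| * |y i| ≤ |P i j| * ‖y‖ * ‖y‖ := by
          apply mul_le_mul (mul_le_mul le_rfl hyj (abs_nonneg _) (abs_nonneg _)) hyi
            (abs_nonneg _) (mul_nonneg (abs_nonneg _) (norm_nonneg _))
      _ = |P i j| * (‖y‖ * ‖y‖) := by ring
  calc |qf P y| ≤ ∑ i, ∑ j, |P i j| * (‖y‖ * ‖y‖) := h1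
    _ = (∑ i, ∑ j, |P i j|) * ‖y‖ ^ 2 := by
        rw [Finset.sum_mul]
        refine Finset.sum_congr rfl fun i _ => ?_
        rw [Finset.sum_mul]
        refine Finset.sum_congr rfl fun j _ => ?_
        ring

/-- the fundamental lower bound: `qf Pund` is below any infinite cost -/
lemma qfPund_le_jinf (hn : 0 < n) (hM : 0 < M)
    (hQ : ∀ i, (S.Q i).PosDef) (hR : ∀ i, (S.R i).PosDef)
    {Pund : Matrix (Fin n) (Fin n) ℝ} (hPund : Pund.PosSemidef) (hC : S.Cond1 Pund)
    (y : Fin n → ℝ) (u : ℕ → Fin m → ℝ) (is : ℕ → Fin M)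
    (hfin : S.Jinf y u is ≠ ⊤) :
    qf Pund y ≤ (S.Jinf y u is).toReal := by
  set f : ℕ → ℝ := fun k => S.ell (S.phi y u is k) (u k) (is k) with hf
  have hf0 : ∀ k, 0 ≤ f k := fun k => ell_nonneg S hQ hR _ _ _
  have hsum : Summable f := by
    have := ENNReal.summable_toReal (f := fun k => ENNReal.ofReal (f k)) hfin
    convert this using 2 with k
    rw [ENNReal.toReal_ofReal (hf0 k)]
  have htend : Tendsto f atTop (nhds 0) := hsum.tendsto_atTop_zero
  -- uniform coercivity constant
  have hci : ∀ i : Fin M, ∃ c > 0, ∀ z : Fin n → ℝ, c * ‖z‖ ^ 2 ≤ qf (S.Q i) z :=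
    fun i => posdef_lower hn (hQ i)
  choose c hc hcle using hci
  haveI : Nonempty (Fin M) := ⟨⟨0, hM⟩⟩
  set c0 : ℝ := Finset.univ.inf' Finset.univ_nonempty c with hc0
  have hc0pos : 0 < c0 := by
    rw [hc0]
    apply (Finset.lt_inf'_iff _).2
    exact fun i _ => hc i
  have hc0le : ∀ i, c0 ≤ c i := fun i => Finset.inf'_le _ (Finset.mem_univ i)
  have hnorm : ∀ k, c0 * ‖S.phi y u is k‖ ^ 2 ≤ f k := by
    intro k
    calc c0 * ‖S.phi y u is k‖ ^ 2 ≤ c (is k) * ‖S.phi y u is k‖ ^ 2 := by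
          apply mul_le_mul_of_nonneg_right (hc0le _) (by positivity)
      _ ≤ qf (S.Q (is k)) (S.phi y u is k) := hcle _ _
      _ ≤ f k := by
          show qf (S.Q (is k)) (S.phi y u is k) ≤ S.ell (S.phi y u is k) (u k) (is k)
          rw [ell_eq_qf]
          have := qf_nonneg (hR (is k)).posSemidef (u k)
          linarith
  -- terminal term tends to zero
  set Cp : ℝ := ∑ i, ∑ j, |Pund i j| with hCp
  have hCp0 : 0 ≤ Cp := Finset.sum_nonneg fun i _ => Finset.sum_nonneg fun j _ => abs_nonneg _
  have hterm : Tendsto (fun N => qf Pund (S.phi y u is N)) atTop (nhds 0) := by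
    apply squeeze_zero_norm (a := fun N => (Cp / c0) * f N)
    · intro N
      calc ‖qf Pund (S.phi y u is N)‖ ≤ Cp * ‖S.phi y u is N‖ ^ 2 := qf_abs_le Pund _
        _ ≤ (Cp / c0) * f N := by
            rw [div_mul_eq_mul_div, le_div_iff₀ hc0pos]
            calc Cp * ‖S.phi y u is N‖ ^ 2 * c0 = Cp * (c0 * ‖S.phi y u is N‖ ^ 2) := by ring
              _ ≤ Cp * f N := mul_le_mul_of_nonneg_left (hnorm N) hCp0
              _ = Cp * f N * 1 := by ring
              _ = Cp * f N := by ring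
    · simpa using htend.const_mul (Cp / c0)
  -- telescoping
  have htel : ∀ N, qf Pund y ≤ (∑ k ∈ Finset.range N, f k) + qf Pund (S.phi y u is N) := by
    intro N
    induction N with
    | zero => simp [phi_zero]
    | succ N ih =>
      have := cond1_qf S hPund hC (S.phi y u is N) (u N) (is N)
      rw [Finset.sum_range_succ]
      rw [phi_succ]
      linarith
  -- pass to the limit
  have hpartial : Tendsto (fun N => ∑ k ∈ Finset.range N, f k) atTop (nhds (∑' k, f k)) :=
    hsum.hasSum.tendsto_sum_nat
  have hlim : Tendsto (fun N => (∑ k ∈ Finset.range N, f k) + qf Pund (S.phi y u is N))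
      atTop (nhds (∑' k, f k)) := by
    simpa using hpartial.add hterm
  have hle : qf Pund y ≤ ∑' k, f k := ge_of_tendsto' hlim htel
  have hJ : (S.Jinf y u is).toReal = ∑' k, f k := by
    rw [SwitchedLQR.Jinf, ENNReal.tsum_toReal_eq (fun k => ENNReal.ofReal_ne_top)]
    exact tsum_congr fun k => ENNReal.toReal_ofReal (hf0 k)
  rw [hJ]
  exact hle

/-- `Vd` is below `Vstar` -/
lemma vd_le_vstar (hn : 0 < n) (hM : 0 < M)
    (hQ : ∀ i, (S.Q i).PosDef) (hR : ∀ i, (S.R i).PosDef)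
    {Pund : Matrix (Fin n) (Fin n) ℝ} (hPund : Pund.PosSemidef) (hC : S.Cond1 Pund)
    (N : ℕ) (z : Fin n → ℝ) :
    ENNReal.ofReal (S.Vd Pund N z) ≤ S.Vstar z := by
  rw [SwitchedLQR.Vstar]
  refine le_iInf fun u => le_iInf fun is => ?_
  rcases eq_or_ne (S.Jinf z u is) ⊤ with htop | hfin
  · rw [htop]; exact le_top
  -- tail of the cost
  have hsplit := jinf_split S z u is N
  have htail_fin : S.Jinf (S.phi z u is N) (fun j => u (N + j)) (fun j => is (N + j)) ≠ ⊤ := by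
    intro h
    rw [hsplit, h] at hfin
    simp at hfin
  have h1 : S.Vd Pund N z ≤ S.Jd Pund N z u is := vd_le_jd S hM hQ hR hPund N z u is
  have h2 : qf Pund (S.phi z u is N) ≤
      (S.Jinf (S.phi z u is N) (fun j => u (N + j)) (fun j => is (N + j))).toReal :=
    qfPund_le_jinf S hn hM hQ hR hPund hC _ _ _ htail_fin
  have h3 : S.Jd Pund N z u is ≤ (S.Jinf z u is).toReal := by
    rw [SwitchedLQR.Jd]
    have hJr : (S.Jinf z u is).toReal =
        (∑ k ∈ Finset.range N, S.ell (S.phi z u is k) (u k) (is k)) +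
          (S.Jinf (S.phi z u is N) (fun j => u (N + j)) (fun j => is (N + j))).toReal := by
      rw [hsplit, ENNReal.toReal_add
        (ENNReal.sum_ne_top.2 fun k _ => ENNReal.ofReal_ne_top) htail_fin]
      · congr 1
        rw [ENNReal.toReal_sum (fun k _ => ENNReal.ofReal_ne_top)]
        exact Finset.sum_congr rfl fun k _ =>
          ENNReal.toReal_ofReal (ell_nonneg S hQ hR _ _ _)
    rw [hJr]
    exact add_le_add_right h2 _
  calc ENNReal.ofReal (S.Vd Pund N z) ≤ ENNReal.ofReal ((S.Jinf z u is).toReal) :=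
        ENNReal.ofReal_le_ofReal (le_trans h1 h3)
    _ = S.Jinf z u is := ENNReal.ofReal_toReal hfin

end Analysis
section Key

open Matrix SwitchedLQR Filter

variable {n m M : ℕ} (S : SwitchedLQR n m M)

lemma vstar_ne_top {Pbar : Matrix (Fin n) (Fin n) ℝ} (hSA : S.SA1 Pbar) (x : Fin n → ℝ) :
    S.Vstar x ≠ ⊤ := by
  obtain ⟨u, is, _, hle⟩ := hSA.2 x
  exact (lt_of_le_of_lt hle ENNReal.ofReal_lt_top).ne

lemma vstar_toReal_le_qfPbar {Pbar : Matrix (Fin n) (Fin n) ℝ} (hSA : S.SA1 Pbar)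
    (x : Fin n → ℝ) : (S.Vstar x).toReal ≤ qf Pbar x := by
  obtain ⟨u, is, _, hle⟩ := hSA.2 x
  have h2 := ENNReal.toReal_mono ENNReal.ofReal_ne_top hle
  rw [ENNReal.toReal_ofReal (show (0:ℝ) ≤ x ⬝ᵥ Pbar *ᵥ x from qf_nonneg hSA.1.posSemidef x)]
    at h2
  exact h2

lemma vd_le_vstar_toReal (hn : 0 < n) (hM : 0 < M)
    (hQ : ∀ i, (S.Q i).PosDef) (hR : ∀ i, (S.R i).PosDef)
    {Pund : Matrix (Fin n) (Fin n) ℝ} (hPund : Pund.PosSemidef) (hC : S.Cond1 Pund)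
    {Pbar : Matrix (Fin n) (Fin n) ℝ} (hSA : S.SA1 Pbar)
    (N : ℕ) (z : Fin n → ℝ) : S.Vd Pund N z ≤ (S.Vstar z).toReal := by
  have h := vd_le_vstar S hn hM hQ hR hPund hC N z
  have h2 := ENNReal.toReal_mono (vstar_ne_top S hSA z) h
  rwa [ENNReal.toReal_ofReal (vd_nonneg S hM hQ hR hPund N z)] at h2

lemma alpha_qf {Pbar : Matrix (Fin n) (Fin n) ℝ} {α : ℝ}
    (hαQ : ∀ i : Fin M, (S.Q i - α • Pbar).PosSemidef) (i : Fin M) (x : Fin n → ℝ) :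
    α * qf Pbar x ≤ qf (S.Q i) x := by
  have := qf_nonneg (hαQ i) x
  rw [qf_sub_sub, qf_smul] at this
  linarith

lemma alpha0_qf {Pbar Pund : Matrix (Fin n) (Fin n) ℝ} {α₀ : ℝ}
    (hα₀Q : ∀ i : Fin M, (S.Q i - α₀ • (Pbar - Pund)).PosSemidef) (i : Fin M) (x : Fin n → ℝ) :
    α₀ * qf (Pbar - Pund) x ≤ qf (S.Q i) x := by
  have := qf_nonneg (hα₀Q i) x
  rw [qf_sub_sub, qf_smul] at this
  linarith

/-- the key induction: relaxed-DP style bound on `V*` in terms of `V_d` -/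
lemma key_bound (hn : 0 < n) (hM : 0 < M)
    (hQ : ∀ i, (S.Q i).PosDef) (hR : ∀ i, (S.R i).PosDef)
    {Pund : Matrix (Fin n) (Fin n) ℝ} (hPund : Pund.PosSemidef) (hC : S.Cond1 Pund)
    {Pbar : Matrix (Fin n) (Fin n) ℝ} (hSA : S.SA1 Pbar)
    {α : ℝ} (hα0 : 0 < α) (hα1 : α < 1)
    (hαQ : ∀ i : Fin M, (S.Q i - α • Pbar).PosSemidef)
    {α₀ : ℝ} (hα₀ : 0 < α₀)
    (hα₀Q : ∀ i : Fin M, (S.Q i - α₀ • (Pbar - Pund)).PosSemidef) :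
    ∀ (N : ℕ) (z : Fin n → ℝ),
      (S.Vstar z).toReal ≤ (1 + (1 - α) ^ N / α₀) * S.Vd Pund (N + 1) z := by
  intro N
  induction N with
  | zero =>
    intro z
    obtain ⟨u, i, heq⟩ := vd_step_exists S hM hQ hR hPund 0 z
    rw [vd_zero] at heq
    have c1 : qf Pund z ≤ S.Vd Pund 1 z := by
      rw [heq]; exact cond1_qf S hPund hC z u i
    have hQle : qf (S.Q i) z ≤ S.ell z u i := by
      rw [ell_eq_qf]
      have := qf_nonneg (hR i).posSemidef u
      linarith
    have hPz : 0 ≤ qf Pund (S.A i *ᵥ z + S.B i *ᵥ u) := qf_nonneg hPund _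
    have c2 : α₀ * qf (Pbar - Pund) z ≤ S.Vd Pund 1 z := by
      have := alpha0_qf S hα₀Q i z
      rw [heq]; linarith
    have c3 : (S.Vstar z).toReal ≤ qf Pund z + qf (Pbar - Pund) z := by
      have := vstar_toReal_le_qfPbar S hSA z
      have h4 := qf_sub_sub Pbar Pund z
      linarith
    have c4 : qf (Pbar - Pund) z ≤ S.Vd Pund 1 z / α₀ := by
      rw [le_div_iff₀ hα₀]; linarith [c2]
    have : (1 + (1 - α) ^ 0 / α₀) * S.Vd Pund 1 z
        = S.Vd Pund 1 z + S.Vd Pund 1 z / α₀ := by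
      rw [pow_zero]; ring
    rw [this]
    linarith
  | succ N ih =>
    intro z
    obtain ⟨u, i, heq⟩ := vd_step_exists S hM hQ hR hPund (N + 1) z
    set z₁ := S.A i *ᵥ z + S.B i *ᵥ u with hz₁
    have h1 : (S.Vstar z).toReal ≤ S.ell z u i + (S.Vstar z₁).toReal := by
      have hstep := vstar_step S z u i
      have hne : ENNReal.ofReal (S.ell z u i) + S.Vstar z₁ ≠ ⊤ := by
        apply ENNReal.add_ne_top.2
        exact ⟨ENNReal.ofReal_ne_top, vstar_ne_top S hSA z₁⟩
      have := ENNReal.toReal_mono hne hstep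
      rwa [ENNReal.toReal_add ENNReal.ofReal_ne_top (vstar_ne_top S hSA z₁),
        ENNReal.toReal_ofReal (ell_nonneg S hQ hR z u i)] at this
    have h2 := ih z₁
    have h3 : α * S.Vd Pund (N + 2) z ≤ S.ell z u i := by
      have ha := alpha_qf S hαQ i z
      have hb : qf (S.Q i) z ≤ S.ell z u i := by
        rw [ell_eq_qf]
        have := qf_nonneg (hR i).posSemidef u
        linarith
      have hc : S.Vd Pund (N + 2) z ≤ (S.Vstar z).toReal :=
        vd_le_vstar_toReal S hn hM hQ hR hPund hC hSA (N + 2) z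
      have hd : (S.Vstar z).toReal ≤ qf Pbar z := vstar_toReal_le_qfPbar S hSA z
      nlinarith
    have hdec : S.Vd Pund (N + 1) z₁ ≤ (1 - α) * S.Vd Pund (N + 2) z := by
      have : S.Vd Pund (N + 1 + 1) z = S.ell z u i + S.Vd Pund (N + 1) z₁ := heq
      linarith [this]
    have hp : (0:ℝ) ≤ (1 - α) ^ N := pow_nonneg (by linarith) N
    have hdiv : (0:ℝ) ≤ (1 - α) ^ N / α₀ := div_nonneg hp hα₀.le
    calc (S.Vstar z).toReal ≤ S.ell z u i + (S.Vstar z₁).toReal := h1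
      _ ≤ S.ell z u i + (1 + (1 - α) ^ N / α₀) * S.Vd Pund (N + 1) z₁ := by linarith
      _ = (S.ell z u i + S.Vd Pund (N + 1) z₁) + ((1 - α) ^ N / α₀) * S.Vd Pund (N + 1) z₁ := by
          ring
      _ = S.Vd Pund (N + 2) z + ((1 - α) ^ N / α₀) * S.Vd Pund (N + 1) z₁ := by
          rw [← heq]
      _ ≤ S.Vd Pund (N + 2) z + ((1 - α) ^ N / α₀) * ((1 - α) * S.Vd Pund (N + 2) z) :=
          add_le_add_right (mul_le_mul_of_nonneg_left hdec hdiv) _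
      _ = (1 + (1 - α) ^ (N + 1) / α₀) * S.Vd Pund (N + 2) z := by
          rw [pow_succ]; ring

end Key
/-- Lyapunov decrease of the optimal value along the closed loop:
under Condition 1 and SA1, with `α,α₀` as in eq. (8), for every integer `d > 1`,
every `x` and every `υ ∈ F_d(x)`,
`V*(υ) ≤ (1 - α + (1-α)^{d-1}/α₀)·V*(x)`, where `V*` is finite by SA1. -/
theorem stmt14 {n m M : ℕ} (hn : 0 < n) (hm : 0 < m) (hM : 0 < M)
    (S : SwitchedLQR n m M)
    (hQ : ∀ i : Fin M, (S.Q i).PosDef) (hR : ∀ i : Fin M, (S.R i).PosDef)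
    (Pund : Matrix (Fin n) (Fin n) ℝ) (hPund : Pund.PosSemidef)
    (hC : S.Cond1 Pund)
    (Pbar : Matrix (Fin n) (Fin n) ℝ) (hSA : S.SA1 Pbar)
    (α : ℝ) (hα0 : 0 < α) (hα1 : α < 1)
    (hαQ : ∀ i : Fin M, (S.Q i - α • Pbar).PosSemidef)
    (α₀ : ℝ) (hα₀ : 0 < α₀)
    (hα₀Q : ∀ i : Fin M, (S.Q i - α₀ • (Pbar - Pund)).PosSemidef)
    (d : ℕ) (hd : 1 < d) (x : Fin n → ℝ) (υ : Fin n → ℝ)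
    (hυ : υ ∈ S.Fd Pund d x) :
    S.Vstar x ≠ ⊤ ∧ S.Vstar υ ≠ ⊤ ∧
    (S.Vstar υ).toReal ≤
      (1 - α + (1 - α) ^ (d - 1) / α₀) * (S.Vstar x).toReal := by

  obtain ⟨p, hp, hυeq⟩ := hυ
  obtain ⟨u, i⟩ := p
  obtain ⟨e, rfl⟩ : ∃ e, d = e + 2 := ⟨d - 2, by omega⟩
  simp only [SwitchedLQR.HStar, Set.mem_setOf_eq] at hp
  have hd1 : e + 2 - 1 = e + 1 := rfl
  rw [hd1] at hp ⊢
  subst hυeq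
  set υ := S.A i *ᵥ x + S.B i *ᵥ u with hυdef
  refine ⟨vstar_ne_top S hSA x, vstar_ne_top S hSA υ, ?_⟩
  -- decrease of Vd along the optimal step
  have hb : qf (S.Q i) x ≤ S.ell x u i := by
    rw [ell_eq_qf]
    have := qf_nonneg (hR i).posSemidef u
    linarith
  have ha := alpha_qf S hαQ i x
  have hc : S.Vd Pund (e + 2) x ≤ (S.Vstar x).toReal :=
    vd_le_vstar_toReal S hn hM hQ hR hPund hC hSA (e + 2) x
  have hd' : (S.Vstar x).toReal ≤ qf Pbar x := vstar_toReal_le_qfPbar S hSA x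
  have hαnn : (0:ℝ) ≤ α := hα0.le
  have hell : α * (S.Vstar x).toReal ≤ S.ell x u i := by nlinarith
  have hvdec : S.Vd Pund (e + 1) υ ≤ (1 - α) * (S.Vstar x).toReal := by
    have : S.Vd Pund (e + 2) x = S.ell x u i + S.Vd Pund (e + 1) υ := hp
    linarith
  have hkey := key_bound S hn hM hQ hR hPund hC hSA hα0 hα1 hαQ hα₀ hα₀Q e υ
  have hfac : (0:ℝ) ≤ 1 + (1 - α) ^ e / α₀ := by
    have : (0:ℝ) ≤ (1 - α) ^ e := pow_nonneg (by linarith) e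
    positivity
  calc (S.Vstar υ).toReal ≤ (1 + (1 - α) ^ e / α₀) * S.Vd Pund (e + 1) υ := hkey
    _ ≤ (1 + (1 - α) ^ e / α₀) * ((1 - α) * (S.Vstar x).toReal) :=
        mul_le_mul_of_nonneg_left hvdec hfac
    _ = (1 - α + (1 - α) ^ (e + 1) / α₀) * (S.Vstar x).toReal := by
        rw [pow_succ]; ring
end

section
/- (Theorem 1, global exponential stability of the closed loop.) Under Condition 1 and Assumption SA1, let α ∈ (0,1) satisfy αP̄ ⪯ Q_i for all i ∈ 𝕄 and α₀ > 0 satisfy α₀(P̄ − P̲) ⪯ Q_i for all i ∈ 𝕄. Let d be an integer with d > max{1, log(α₀α)/log(1−α) + 1} (equivalently d > 1 and (1−α)^{d−1} < α·α₀), so that λ_d := 1 − α + (1−α)^{d−1}/α₀ ∈ (0,1). Let q, L > 0 be such that q·|x|² ≤ xᵀQ_ix for all i ∈ 𝕄 and x ∈ ℝⁿ, and xᵀP̄x ≤ L·|x|² for all x ∈ ℝⁿ, and set β := L/q. Then every closed-loop solution (x_k)_{k∈ℕ} with x_0 = x ∈ ℝⁿ and x_{k+1} ∈ F_d(x_k)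 for all k satisfies |x_k|² ≤ β·λ_d^k·|x|² for all k ∈ ℕ (here |·| is the Euclidean norm). -/
open Matrix Filter
open scoped ENNReal

namespace SwitchedLQR

variable {n m M : ℕ}

lemma dotT {k l : ℕ} (A : Matrix (Fin k) (Fin l) ℝ) (x : Fin k → ℝ) (y : Fin l → ℝ) :
    x ⬝ᵥ (A *ᵥ y) = (Aᵀ *ᵥ x) ⬝ᵥ y := by
  rw [dotProduct_mulVec, mulVec_transpose]

lemma psd_nonneg {k : ℕ} {P : Matrix (Fin k) (Fin k) ℝ} (h : P.PosSemidef) (x : Fin k → ℝ) :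
    0 ≤ x ⬝ᵥ (P *ᵥ x) := by simpa using h.dotProduct_mulVec_nonneg x

lemma dot_sq {k : ℕ} (G : Matrix (Fin k) (Fin k) ℝ) (hG : G.PosDef) (hGs : Gᵀ = G)
    (u v : Fin k → ℝ) :
    (u + G⁻¹ *ᵥ v) ⬝ᵥ (G *ᵥ (u + G⁻¹ *ᵥ v))
      = u ⬝ᵥ (G *ᵥ u) + u ⬝ᵥ v + v ⬝ᵥ u + v ⬝ᵥ (G⁻¹ *ᵥ v) := by
  have hdet : IsUnit G.det := isUnit_iff_ne_zero.mpr hG.det_pos.ne'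
  have hGinv : G * G⁻¹ = 1 := Matrix.mul_nonsing_inv _ hdet
  have hGinvs : (G⁻¹)ᵀ = G⁻¹ := by rw [Matrix.transpose_nonsing_inv, hGs]
  have h1 : G *ᵥ (G⁻¹ *ᵥ v) = v := by
    rw [Matrix.mulVec_mulVec, hGinv, Matrix.one_mulVec]
  have h2 : ∀ w : Fin k → ℝ, (G⁻¹ *ᵥ v) ⬝ᵥ w = v ⬝ᵥ (G⁻¹ *ᵥ w) := by
    intro w
    rw [dotProduct_comm, dotT, hGinvs, dotProduct_comm]
  have h3 : G⁻¹ * G = 1 := Matrix.nonsing_inv_mul _ hdet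
  rw [Matrix.mulVec_add, dotProduct_add, add_dotProduct, add_dotProduct, h1,
    h2 (G *ᵥ u), h2 v, Matrix.mulVec_mulVec, h3, Matrix.one_mulVec, dotProduct_comm v u]
  ring


section Completion

variable {n m M : ℕ} (S : SwitchedLQR n m M)

lemma G_posDef (i : Fin M) {P : Matrix (Fin n) (Fin n) ℝ} (hP : P.PosSemidef)
    (hR : (S.R i).PosDef) : (S.R i + (S.B i)ᵀ * P * S.B i).PosDef := by
  have h2 : ((S.B i)ᵀ * P * S.B i).PosSemidef := by
    have := hP.conjTranspose_mul_mul_same (S.B i)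
    simpa using this
  exact hR.add_posSemidef h2

lemma G_symm (i : Fin M) {P : Matrix (Fin n) (Fin n) ℝ} (hP : P.PosSemidef)
    (hR : (S.R i).PosDef) : (S.R i + (S.B i)ᵀ * P * S.B i)ᵀ = S.R i + (S.B i)ᵀ * P * S.B i := by
  have hPs : Pᵀ = P := hP.1
  have hRs : (S.R i)ᵀ = S.R i := hR.1
  rw [Matrix.transpose_add, hRs, Matrix.transpose_mul, Matrix.transpose_mul,
    Matrix.transpose_transpose, hPs, Matrix.mul_assoc]

/-- Completion of squares. -/
lemma completion (i : Fin M) {P : Matrix (Fin n) (Fin n) ℝ} (hP : P.PosSemidef)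
    (hR : (S.R i).PosDef) (x : Fin n → ℝ) (u : Fin m → ℝ) :
    S.ell x u i
      + (S.A i *ᵥ x + S.B i *ᵥ u) ⬝ᵥ (P *ᵥ (S.A i *ᵥ x + S.B i *ᵥ u))
      = x ⬝ᵥ (S.Ric i P *ᵥ x)
        + (u + (S.R i + (S.B i)ᵀ * P * S.B i)⁻¹ *ᵥ (((S.B i)ᵀ * P * S.A i) *ᵥ x)) ⬝ᵥ
            ((S.R i + (S.B i)ᵀ * P * S.B i) *ᵥ
              (u + (S.R i + (S.B i)ᵀ * P * S.B i)⁻¹ *ᵥ (((S.B i)ᵀ * P * S.A i) *ᵥ x))) := by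
  set A := S.A i
  set B := S.B i
  set Q := S.Q i
  set R := S.R i
  set G := R + Bᵀ * P * B with hGdef
  set v := (Bᵀ * P * A) *ᵥ x with hvdef
  have hPs : Pᵀ = P := hP.1
  have hG : G.PosDef := S.G_posDef i hP hR
  have hGs : Gᵀ = G := S.G_symm i hP hR
  rw [dot_sq G hG hGs u v]
  -- expand the cross and quadratic terms
  have hPsym : ∀ (w z : Fin n → ℝ), w ⬝ᵥ (P *ᵥ z) = (P *ᵥ w) ⬝ᵥ z := by
    intro w z; rw [dotT, hPs]
  have e1 : x ⬝ᵥ ((Aᵀ * P * A) *ᵥ x) = (A *ᵥ x) ⬝ᵥ (P *ᵥ (A *ᵥ x)) := by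
    rw [← Matrix.mulVec_mulVec, ← Matrix.mulVec_mulVec, dotT, Matrix.transpose_transpose]
  have e2 : (A *ᵥ x) ⬝ᵥ (P *ᵥ (B *ᵥ u)) = v ⬝ᵥ u := by
    rw [Matrix.mulVec_mulVec, dotT, Matrix.transpose_mul, hPs, Matrix.mulVec_mulVec]
  have e3 : (B *ᵥ u) ⬝ᵥ (P *ᵥ (A *ᵥ x)) = u ⬝ᵥ v := by
    rw [hPsym (B *ᵥ u) (A *ᵥ x), dotProduct_comm, e2]
    exact dotProduct_comm _ _
  have e4 : (B *ᵥ u) ⬝ᵥ (P *ᵥ (B *ᵥ u)) = u ⬝ᵥ ((Bᵀ * P * B) *ᵥ u) := by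
    rw [Matrix.mulVec_mulVec, dotT, Matrix.transpose_mul, hPs, Matrix.mulVec_mulVec]
    exact dotProduct_comm _ _
  have h1 : (Aᵀ * P * B) *ᵥ (G⁻¹ *ᵥ v) = (Aᵀ * P * B * G⁻¹ * (Bᵀ * P * A)) *ᵥ x := by
    rw [Matrix.mulVec_mulVec, hvdef, Matrix.mulVec_mulVec]
  have e5 : x ⬝ᵥ ((Aᵀ * P * B * G⁻¹ * (Bᵀ * P * A)) *ᵥ x) = v ⬝ᵥ (G⁻¹ *ᵥ v) := by
    rw [← h1, dotT, Matrix.transpose_mul, Matrix.transpose_mul, Matrix.transpose_transpose,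
      hPs, ← Matrix.mul_assoc, ← hvdef]
  have hRic : x ⬝ᵥ (S.Ric i P *ᵥ x)
      = x ⬝ᵥ (Q *ᵥ x) + (A *ᵥ x) ⬝ᵥ (P *ᵥ (A *ᵥ x)) - v ⬝ᵥ (G⁻¹ *ᵥ v) := by
    show x ⬝ᵥ ((Q + Aᵀ * P * A - Aᵀ * P * B * G⁻¹ * (Bᵀ * P * A)) *ᵥ x) = _
    rw [Matrix.sub_mulVec, Matrix.add_mulVec, dotProduct_sub, dotProduct_add, e1, e5]
  have hell : S.ell x u i = x ⬝ᵥ (Q *ᵥ x) + u ⬝ᵥ (R *ᵥ u) := rfl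
  have hGu : u ⬝ᵥ (G *ᵥ u) = u ⬝ᵥ (R *ᵥ u) + u ⬝ᵥ ((Bᵀ * P * B) *ᵥ u) := by
    rw [hGdef, Matrix.add_mulVec, dotProduct_add]
  rw [hell, hRic, hGu, Matrix.mulVec_add, dotProduct_add, add_dotProduct, add_dotProduct,
    e2, e3, e4]
  ring

end Completion


section RicFacts

variable {n m M : ℕ} (S : SwitchedLQR n m M)

lemma ric_le (i : Fin M) {P : Matrix (Fin n) (Fin n) ℝ} (hP : P.PosSemidef)
    (hR : (S.R i).PosDef) (x : Fin n → ℝ) (u : Fin m → ℝ) :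
    x ⬝ᵥ (S.Ric i P *ᵥ x)
      ≤ S.ell x u i + (S.A i *ᵥ x + S.B i *ᵥ u) ⬝ᵥ (P *ᵥ (S.A i *ᵥ x + S.B i *ᵥ u)) := by
  rw [S.completion i hP hR x u]
  have hG : (S.R i + (S.B i)ᵀ * P * S.B i).PosDef := S.G_posDef i hP hR
  have := psd_nonneg hG.posSemidef
    (u + (S.R i + (S.B i)ᵀ * P * S.B i)⁻¹ *ᵥ (((S.B i)ᵀ * P * S.A i) *ᵥ x))
  linarith

lemma ric_ex (i : Fin M) {P : Matrix (Fin n) (Fin n) ℝ} (hP : P.PosSemidef)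
    (hR : (S.R i).PosDef) (x : Fin n → ℝ) :
    ∃ u : Fin m → ℝ,
      S.ell x u i + (S.A i *ᵥ x + S.B i *ᵥ u) ⬝ᵥ (P *ᵥ (S.A i *ᵥ x + S.B i *ᵥ u))
        = x ⬝ᵥ (S.Ric i P *ᵥ x) := by
  refine ⟨-((S.R i + (S.B i)ᵀ * P * S.B i)⁻¹ *ᵥ (((S.B i)ᵀ * P * S.A i) *ᵥ x)), ?_⟩
  rw [S.completion i hP hR x _]
  simp

lemma ric_posSemidef (i : Fin M) {P : Matrix (Fin n) (Fin n) ℝ} (hP : P.PosSemidef)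
    (hQ : (S.Q i).PosDef) (hR : (S.R i).PosDef) : (S.Ric i P).PosSemidef := by
  refine Matrix.PosSemidef.of_dotProduct_mulVec_nonneg ?_ ?_
  · -- Hermitian
    have hPs : Pᵀ = P := hP.1
    have hQs : (S.Q i)ᵀ = S.Q i := hQ.1
    have hGs : (S.R i + (S.B i)ᵀ * P * S.B i)ᵀ = S.R i + (S.B i)ᵀ * P * S.B i :=
      S.G_symm i hP hR
    have hGinvs : ((S.R i + (S.B i)ᵀ * P * S.B i)⁻¹)ᵀ = (S.R i + (S.B i)ᵀ * P * S.B i)⁻¹ := by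
      rw [Matrix.transpose_nonsing_inv, hGs]
    show (S.Ric i P)ᵀ = S.Ric i P
    unfold Ric
    rw [Matrix.transpose_sub, Matrix.transpose_add]
    simp only [Matrix.transpose_mul, Matrix.transpose_transpose, hPs, hQs, hGinvs]
    rw [Matrix.mul_assoc ((S.A i)ᵀ) P (S.A i)]
    congr 1
    simp only [← Matrix.mul_assoc]
  · intro y
    obtain ⟨u, hu⟩ := S.ric_ex i hP hR y
    have h1 : 0 ≤ S.ell y u i := by
      have := psd_nonneg hQ.posSemidef y
      have := psd_nonneg hR.posSemidef u
      unfold ell; linarith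
    have h2 : 0 ≤ (S.A i *ᵥ y + S.B i *ᵥ u) ⬝ᵥ (P *ᵥ (S.A i *ᵥ y + S.B i *ᵥ u)) :=
      psd_nonneg hP _
    simp only [star_trivial]
    calc (0:ℝ) ≤ S.ell y u i + (S.A i *ᵥ y + S.B i *ᵥ u) ⬝ᵥ (P *ᵥ (S.A i *ᵥ y + S.B i *ᵥ u)) := by
          linarith
    _ = y ⬝ᵥ (S.Ric i P *ᵥ y) := hu

lemma pseq_posSemidef {Pund : Matrix (Fin n) (Fin n) ℝ} (hPund : Pund.PosSemidef)
    (hQ : ∀ i, (S.Q i).PosDef) (hR : ∀ i, (S.R i).PosDef) (l : List (Fin M)) :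
    (S.Pseq Pund l).PosSemidef := by
  induction l with
  | nil => exact hPund
  | cons i l ih => exact S.ric_posSemidef i ih (hQ i) (hR i)

lemma pseq_cons (Pund : Matrix (Fin n) (Fin n) ℝ) (i : Fin M) (l : List (Fin M)) :
    S.Pseq Pund (i :: l) = S.Ric i (S.Pseq Pund l) := rfl

end RicFacts


section VdFacts

variable {n m M : ℕ} (S : SwitchedLQR n m M)

lemma vdSet_eq (Pund : Matrix (Fin n) (Fin n) ℝ) (d : ℕ) (x : Fin n → ℝ) :
    {r : ℝ | ∃ l : List (Fin M), l.length = d ∧ r = x ⬝ᵥ ((S.Pseq Pund l) *ᵥ x)}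
      = Set.range (fun f : Fin d → Fin M => x ⬝ᵥ ((S.Pseq Pund (List.ofFn f)) *ᵥ x)) := by
  ext r
  constructor
  · rintro ⟨l, hl, rfl⟩
    subst hl
    exact ⟨l.get, by simp [List.ofFn_get]⟩
  · rintro ⟨f, rfl⟩
    exact ⟨List.ofFn f, by simp, rfl⟩

lemma vd_finite (Pund : Matrix (Fin n) (Fin n) ℝ) (d : ℕ) (x : Fin n → ℝ) :
    {r : ℝ | ∃ l : List (Fin M), l.length = d ∧ r = x ⬝ᵥ ((S.Pseq Pund l) *ᵥ x)}.Finite := by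
  rw [vdSet_eq]; exact Set.finite_range _

lemma vd_nonempty (hM : 0 < M) (Pund : Matrix (Fin n) (Fin n) ℝ) (d : ℕ) (x : Fin n → ℝ) :
    {r : ℝ | ∃ l : List (Fin M), l.length = d ∧ r = x ⬝ᵥ ((S.Pseq Pund l) *ᵥ x)}.Nonempty := by
  have : Nonempty (Fin M) := ⟨⟨0, hM⟩⟩
  rw [vdSet_eq]
  exact Set.range_nonempty _

lemma vd_le (Pund : Matrix (Fin n) (Fin n) ℝ) {d : ℕ} {l : List (Fin M)} (hl : l.length = d)
    (x : Fin n → ℝ) : S.Vd Pund d x ≤ x ⬝ᵥ ((S.Pseq Pund l) *ᵥ x) :=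
  csInf_le (S.vd_finite Pund d x).bddBelow ⟨l, hl, rfl⟩

lemma vd_ex (hM : 0 < M) (Pund : Matrix (Fin n) (Fin n) ℝ) (d : ℕ) (x : Fin n → ℝ) :
    ∃ l : List (Fin M), l.length = d ∧ S.Vd Pund d x = x ⬝ᵥ ((S.Pseq Pund l) *ᵥ x) :=
  (S.vd_nonempty hM Pund d x).csInf_mem (S.vd_finite Pund d x)

lemma vd_zero (hM : 0 < M) (Pund : Matrix (Fin n) (Fin n) ℝ) (x : Fin n → ℝ) :
    S.Vd Pund 0 x = x ⬝ᵥ (Pund *ᵥ x) := by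
  obtain ⟨l, hl, h⟩ := S.vd_ex hM Pund 0 x
  rw [List.length_eq_zero_iff] at hl
  subst hl
  exact h

lemma vd_nonneg (hM : 0 < M) {Pund : Matrix (Fin n) (Fin n) ℝ} (hPund : Pund.PosSemidef)
    (hQ : ∀ i, (S.Q i).PosDef) (hR : ∀ i, (S.R i).PosDef) (d : ℕ) (x : Fin n → ℝ) :
    0 ≤ S.Vd Pund d x := by
  obtain ⟨l, hl, h⟩ := S.vd_ex hM Pund d x
  rw [h]
  exact psd_nonneg (S.pseq_posSemidef hPund hQ hR l) x

lemma ell_nonneg (hQ : ∀ i, (S.Q i).PosDef) (hR : ∀ i, (S.R i).PosDef)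
    (x : Fin n → ℝ) (u : Fin m → ℝ) (i : Fin M) : 0 ≤ S.ell x u i := by
  have := psd_nonneg (hQ i).posSemidef x
  have := psd_nonneg (hR i).posSemidef u
  unfold ell; linarith

/-- DP inequality. -/
lemma dp_le (hM : 0 < M) {Pund : Matrix (Fin n) (Fin n) ℝ} (hPund : Pund.PosSemidef)
    (hQ : ∀ i, (S.Q i).PosDef) (hR : ∀ i, (S.R i).PosDef) (j : ℕ) (x : Fin n → ℝ)
    (u : Fin m → ℝ) (i : Fin M) :
    S.Vd Pund (j + 1) x ≤ S.ell x u i + S.Vd Pund j (S.A i *ᵥ x + S.B i *ᵥ u) := by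
  obtain ⟨l, hl, h⟩ := S.vd_ex hM Pund j (S.A i *ᵥ x + S.B i *ᵥ u)
  have h1 : S.Vd Pund (j + 1) x ≤ x ⬝ᵥ ((S.Pseq Pund (i :: l)) *ᵥ x) :=
    S.vd_le Pund (by simp [hl]) x
  rw [pseq_cons] at h1
  have h2 := S.ric_le i (S.pseq_posSemidef hPund hQ hR l) (hR i) x u
  rw [h] ; linarith

/-- DP equality at an optimal pair. -/
lemma dp_ex (hM : 0 < M) {Pund : Matrix (Fin n) (Fin n) ℝ} (hPund : Pund.PosSemidef)
    (hQ : ∀ i, (S.Q i).PosDef) (hR : ∀ i, (S.R i).PosDef) (j : ℕ) (x : Fin n → ℝ) :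
    ∃ (u : Fin m → ℝ) (i : Fin M),
      S.Vd Pund (j + 1) x = S.ell x u i + S.Vd Pund j (S.A i *ᵥ x + S.B i *ᵥ u) := by
  obtain ⟨l', hl', h⟩ := S.vd_ex hM Pund (j + 1) x
  match l', hl' with
  | i :: l, hl' =>
    have hl : l.length = j := by simpa using hl'
    obtain ⟨u, hu⟩ := S.ric_ex i (S.pseq_posSemidef hPund hQ hR l) (hR i) x
    refine ⟨u, i, le_antisymm (S.dp_le hM hPund hQ hR j x u i) ?_⟩
    have h2 : S.Vd Pund j (S.A i *ᵥ x + S.B i *ᵥ u)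
        ≤ (S.A i *ᵥ x + S.B i *ᵥ u) ⬝ᵥ ((S.Pseq Pund l) *ᵥ (S.A i *ᵥ x + S.B i *ᵥ u)) :=
      S.vd_le Pund hl _
    rw [h, pseq_cons, ← hu]
    linarith

end VdFacts


section Cond1Facts

variable {n m M : ℕ} (S : SwitchedLQR n m M)

/-- Condition 1 as a quadratic-form inequality. -/
lemma cond1_ineq {Pund : Matrix (Fin n) (Fin n) ℝ} (hC : S.Cond1 Pund)
    (x : Fin n → ℝ) (u : Fin m → ℝ) (i : Fin M) :
    x ⬝ᵥ (Pund *ᵥ x)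
      ≤ S.ell x u i + (S.A i *ᵥ x + S.B i *ᵥ u) ⬝ᵥ (Pund *ᵥ (S.A i *ᵥ x + S.B i *ᵥ u)) := by
  have h := (hC i).dotProduct_mulVec_nonneg (Sum.elim x u)
  simp only [star_trivial] at h
  rw [fromBlocks_mulVec, sumElim_dotProduct_sumElim] at h
  simp only [Sum.elim_comp_inl, Sum.elim_comp_inr] at h
  set A := S.A i
  set B := S.B i
  set Q := S.Q i
  set R := S.R i
  have e1 : x ⬝ᵥ ((Aᵀ * Pund * A - Pund + Q) *ᵥ x + (Aᵀ * Pund * B) *ᵥ u)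
      = (A *ᵥ x) ⬝ᵥ (Pund *ᵥ (A *ᵥ x)) - x ⬝ᵥ (Pund *ᵥ x) + x ⬝ᵥ (Q *ᵥ x)
        + (A *ᵥ x) ⬝ᵥ (Pund *ᵥ (B *ᵥ u)) := by
    rw [dotProduct_add, Matrix.add_mulVec, Matrix.sub_mulVec, dotProduct_add, dotProduct_sub]
    congr 1
    · congr 2
      rw [← Matrix.mulVec_mulVec, ← Matrix.mulVec_mulVec, dotT, Matrix.transpose_transpose]
    · rw [← Matrix.mulVec_mulVec, ← Matrix.mulVec_mulVec, dotT, Matrix.transpose_transpose]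
  have e2 : u ⬝ᵥ ((Bᵀ * Pund * A) *ᵥ x + (R + Bᵀ * Pund * B) *ᵥ u)
      = (B *ᵥ u) ⬝ᵥ (Pund *ᵥ (A *ᵥ x)) + u ⬝ᵥ (R *ᵥ u) + (B *ᵥ u) ⬝ᵥ (Pund *ᵥ (B *ᵥ u)) := by
    rw [dotProduct_add, Matrix.add_mulVec, dotProduct_add]
    have f1 : u ⬝ᵥ ((Bᵀ * Pund * A) *ᵥ x) = (B *ᵥ u) ⬝ᵥ (Pund *ᵥ (A *ᵥ x)) := by
      rw [← Matrix.mulVec_mulVec, ← Matrix.mulVec_mulVec, dotT, Matrix.transpose_transpose]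
    have f2 : u ⬝ᵥ ((Bᵀ * Pund * B) *ᵥ u) = (B *ᵥ u) ⬝ᵥ (Pund *ᵥ (B *ᵥ u)) := by
      rw [← Matrix.mulVec_mulVec, ← Matrix.mulVec_mulVec, dotT, Matrix.transpose_transpose]
    rw [f1, f2]
    ring
  rw [e1, e2] at h
  have e3 : (A *ᵥ x + B *ᵥ u) ⬝ᵥ (Pund *ᵥ (A *ᵥ x + B *ᵥ u))
      = (A *ᵥ x) ⬝ᵥ (Pund *ᵥ (A *ᵥ x)) + (A *ᵥ x) ⬝ᵥ (Pund *ᵥ (B *ᵥ u))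
        + (B *ᵥ u) ⬝ᵥ (Pund *ᵥ (A *ᵥ x)) + (B *ᵥ u) ⬝ᵥ (Pund *ᵥ (B *ᵥ u)) := by
    rw [Matrix.mulVec_add, dotProduct_add, add_dotProduct, add_dotProduct]
    ring
  have hell : S.ell x u i = x ⬝ᵥ (Q *ᵥ x) + u ⬝ᵥ (R *ᵥ u) := rfl
  rw [hell, e3]
  linarith

/-- Monotonicity of the value iterates. -/
lemma vd_mono (hM : 0 < M) {Pund : Matrix (Fin n) (Fin n) ℝ} (hPund : Pund.PosSemidef)
    (hQ : ∀ i, (S.Q i).PosDef) (hR : ∀ i, (S.R i).PosDef) (hC : S.Cond1 Pund) (j : ℕ)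
    (x : Fin n → ℝ) : S.Vd Pund j x ≤ S.Vd Pund (j + 1) x := by
  induction j generalizing x with
  | zero =>
    obtain ⟨u, i, h⟩ := S.dp_ex hM hPund hQ hR 0 x
    rw [h, S.vd_zero hM, S.vd_zero hM]
    exact S.cond1_ineq hC x u i
  | succ j ih =>
    obtain ⟨u, i, h⟩ := S.dp_ex hM hPund hQ hR (j + 1) x
    have h2 := S.dp_le hM hPund hQ hR j x u i
    have h3 := ih (S.A i *ᵥ x + S.B i *ᵥ u)
    linarith

end Cond1Facts


section Traj

variable {n m M : ℕ} (S : SwitchedLQR n m M)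

lemma phi_shift (x : Fin n → ℝ) (u : ℕ → Fin m → ℝ) (is : ℕ → Fin M) (k : ℕ) :
    S.phi x u is (k + 1)
      = S.phi (S.A (is 0) *ᵥ x + S.B (is 0) *ᵥ u 0)
          (fun t => u (t + 1)) (fun t => is (t + 1)) k := by
  induction k with
  | zero => rfl
  | succ k ih => show S.phi x u is (k + 1 + 1) = _; rw [phi, ih]; rfl

lemma Jd_succ (Pund : Matrix (Fin n) (Fin n) ℝ) (j : ℕ) (x : Fin n → ℝ)
    (u : ℕ → Fin m → ℝ) (is : ℕ → Fin M) :
    S.Jd Pund (j + 1) x u is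
      = S.ell x (u 0) (is 0)
        + S.Jd Pund j (S.A (is 0) *ᵥ x + S.B (is 0) *ᵥ u 0)
            (fun t => u (t + 1)) (fun t => is (t + 1)) := by
  unfold Jd
  rw [Finset.sum_range_succ']
  simp only [S.phi_shift x u is]
  show _ + S.ell (S.phi x u is 0) (u 0) (is 0) + _ = _
  rw [show S.phi x u is 0 = x from rfl]
  ring

lemma vd_le_Jd (hM : 0 < M) {Pund : Matrix (Fin n) (Fin n) ℝ} (hPund : Pund.PosSemidef)
    (hQ : ∀ i, (S.Q i).PosDef) (hR : ∀ i, (S.R i).PosDef) (j : ℕ) (x : Fin n → ℝ)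
    (u : ℕ → Fin m → ℝ) (is : ℕ → Fin M) :
    S.Vd Pund j x ≤ S.Jd Pund j x u is := by
  induction j generalizing x u is with
  | zero => rw [S.vd_zero hM]; unfold Jd; simp [phi]
  | succ j ih =>
    rw [S.Jd_succ]
    have h1 := S.dp_le hM hPund hQ hR j x (u 0) (is 0)
    have h2 := ih (S.A (is 0) *ᵥ x + S.B (is 0) *ᵥ u 0) (fun t => u (t + 1)) (fun t => is (t + 1))
    linarith

lemma Jd_mono {Pund : Matrix (Fin n) (Fin n) ℝ} (hC : S.Cond1 Pund) (N : ℕ) (x : Fin n → ℝ)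
    (u : ℕ → Fin m → ℝ) (is : ℕ → Fin M) :
    S.Jd Pund N x u is ≤ S.Jd Pund (N + 1) x u is := by
  unfold Jd
  rw [Finset.sum_range_succ]
  have h := S.cond1_ineq hC (S.phi x u is N) (u N) (is N)
  have hφ : S.phi x u is (N + 1) = S.A (is N) *ᵥ S.phi x u is N + S.B (is N) *ᵥ u N := rfl
  rw [hφ]
  linarith

lemma quad_le_sum_sq {P : Matrix (Fin n) (Fin n) ℝ} (y : Fin n → ℝ) :
    y ⬝ᵥ (P *ᵥ y) ≤ (∑ i, ∑ j, |P i j|) * ∑ j, (y j) ^ 2 := by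
  have hS : ∀ a b : Fin n, |y a| * |y b| ≤ ∑ j, (y j) ^ 2 := by
    intro a b
    have ha : (y a) ^ 2 ≤ ∑ j, (y j) ^ 2 :=
      Finset.single_le_sum (f := fun j => (y j) ^ 2) (fun _ _ => sq_nonneg _) (Finset.mem_univ a)
    have hb : (y b) ^ 2 ≤ ∑ j, (y j) ^ 2 :=
      Finset.single_le_sum (f := fun j => (y j) ^ 2) (fun _ _ => sq_nonneg _) (Finset.mem_univ b)
    nlinarith [sq_nonneg (|y a| - |y b|), sq_abs (y a), sq_abs (y b)]
  calc y ⬝ᵥ (P *ᵥ y) = ∑ i, ∑ j, y i * (P i j * y j) := by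
        simp [dotProduct, Matrix.mulVec, Finset.mul_sum]
    _ ≤ ∑ i, ∑ j, |P i j| * ∑ k, (y k) ^ 2 := by
        refine Finset.sum_le_sum fun i _ => Finset.sum_le_sum fun j _ => ?_
        calc y i * (P i j * y j) ≤ |y i * (P i j * y j)| := le_abs_self _
          _ = |P i j| * (|y i| * |y j|) := by rw [abs_mul, abs_mul]; ring
          _ ≤ |P i j| * ∑ k, (y k) ^ 2 :=
              mul_le_mul_of_nonneg_left (hS i j) (abs_nonneg _)
    _ = (∑ i, ∑ j, |P i j|) * ∑ k, (y k) ^ 2 := by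
        rw [Finset.sum_mul]
        exact Finset.sum_congr rfl fun i _ => (Finset.sum_mul _ _ _).symm

end Traj


section VleW

variable {n m M : ℕ} (S : SwitchedLQR n m M)

/-- The value iterates are bounded by the quadratic form of `P̄`. -/
lemma vd_le_W (hM : 0 < M) {Pund : Matrix (Fin n) (Fin n) ℝ} (hPund : Pund.PosSemidef)
    (hQ : ∀ i, (S.Q i).PosDef) (hR : ∀ i, (S.R i).PosDef) (hC : S.Cond1 Pund)
    {Pbar : Matrix (Fin n) (Fin n) ℝ} (hSA : S.SA1 Pbar)
    {q : ℝ} (hq : 0 < q)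
    (hqQ : ∀ (i : Fin M) (y : Fin n → ℝ), q * ∑ j, (y j) ^ 2 ≤ y ⬝ᵥ ((S.Q i) *ᵥ y))
    (j : ℕ) (x : Fin n → ℝ) :
    S.Vd Pund j x ≤ x ⬝ᵥ (Pbar *ᵥ x) := by
  obtain ⟨hPbar, hex⟩ := hSA
  obtain ⟨u, is, hJV, hVW⟩ := hex x
  have hJW : S.Jinf x u is ≤ ENNReal.ofReal (x ⬝ᵥ (Pbar *ᵥ x)) := by rw [hJV]; exact hVW
  have hW0 : 0 ≤ x ⬝ᵥ (Pbar *ᵥ x) := psd_nonneg hPbar.posSemidef x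
  set f : ℕ → ℝ := fun k => S.ell (S.phi x u is k) (u k) (is k) with hf
  have hf0 : ∀ k, 0 ≤ f k := fun k => S.ell_nonneg hQ hR _ _ _
  have hSN : ∀ N, (∑ k ∈ Finset.range N, f k) ≤ x ⬝ᵥ (Pbar *ᵥ x) := by
    intro N
    have h1 : ENNReal.ofReal (∑ k ∈ Finset.range N, f k) ≤ S.Jinf x u is := by
      rw [ENNReal.ofReal_sum_of_nonneg (fun k _ => hf0 k)]
      exact ENNReal.sum_le_tsum _
    exact (ENNReal.ofReal_le_ofReal_iff hW0).mp (le_trans h1 hJW)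
  have hsum : Summable f := summable_of_sum_range_le hf0 hSN
  have hf_to0 : Filter.Tendsto f Filter.atTop (nhds 0) := hsum.tendsto_atTop_zero
  have hsq : ∀ N, q * (∑ j', (S.phi x u is N j') ^ 2) ≤ f N := by
    intro N
    have h1 := hqQ (is N) (S.phi x u is N)
    have h2 := psd_nonneg (hR (is N)).posSemidef (u N)
    have h3 : f N = (S.phi x u is N) ⬝ᵥ (S.Q (is N) *ᵥ (S.phi x u is N))
        + (u N) ⬝ᵥ (S.R (is N) *ᵥ (u N)) := rfl
    linarith
  have hsq0 : Filter.Tendsto (fun N => ∑ j', (S.phi x u is N j') ^ 2)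
      Filter.atTop (nhds 0) := by
    apply squeeze_zero (fun N => Finset.sum_nonneg fun _ _ => sq_nonneg _)
      (g := fun N => f N / q)
      (fun N => (le_div_iff₀ hq).mpr (by have := hsq N; linarith))
    have := hf_to0.div_const q
    simpa using this
  have hterm0 : Filter.Tendsto
      (fun N => (S.phi x u is N) ⬝ᵥ (Pund *ᵥ S.phi x u is N)) Filter.atTop (nhds 0) := by
    apply squeeze_zero (fun N => psd_nonneg hPund _)
      (g := fun N => (∑ i', ∑ j', |Pund i' j'|) * ∑ j', (S.phi x u is N j') ^ 2)
      (fun N => quad_le_sum_sq _)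
    simpa using hsq0.const_mul (∑ i', ∑ j', |Pund i' j'|)
  have hVJ : ∀ N, j ≤ N → S.Vd Pund j x ≤ S.Jd Pund N x u is := by
    intro N hN
    induction N, hN using Nat.le_induction with
    | base => exact S.vd_le_Jd hM hPund hQ hR j x u is
    | succ N hN ih => exact le_trans ih (S.Jd_mono hC N x u is)
  have hbound : ∀ᶠ N in Filter.atTop,
      S.Vd Pund j x ≤ x ⬝ᵥ (Pbar *ᵥ x) + (S.phi x u is N) ⬝ᵥ (Pund *ᵥ S.phi x u is N) := by
    refine Filter.eventually_atTop.mpr ⟨j, fun N hN => ?_⟩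
    have h1 := hVJ N hN
    have h2 := hSN N
    unfold Jd at h1
    linarith
  have hlim : Filter.Tendsto
      (fun N => x ⬝ᵥ (Pbar *ᵥ x) + (S.phi x u is N) ⬝ᵥ (Pund *ᵥ S.phi x u is N))
      Filter.atTop (nhds (x ⬝ᵥ (Pbar *ᵥ x))) := by
    simpa using tendsto_const_nhds.add hterm0
  exact ge_of_tendsto hlim hbound

end VleW


section Key

variable {n m M : ℕ} (S : SwitchedLQR n m M)

lemma stage_le_vd (hM : 0 < M) {Pund : Matrix (Fin n) (Fin n) ℝ} (hPund : Pund.PosSemidef)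
    (hQ : ∀ i, (S.Q i).PosDef) (hR : ∀ i, (S.R i).PosDef) (j : ℕ) (y : Fin n → ℝ) :
    ∃ i : Fin M, y ⬝ᵥ (S.Q i *ᵥ y) ≤ S.Vd Pund (j + 1) y := by
  obtain ⟨u, i, h⟩ := S.dp_ex hM hPund hQ hR j y
  refine ⟨i, ?_⟩
  have h1 := psd_nonneg (hR i).posSemidef u
  have h2 := S.vd_nonneg hM hPund hQ hR j (S.A i *ᵥ y + S.B i *ᵥ u)
  have h3 : S.ell y u i = y ⬝ᵥ (S.Q i *ᵥ y) + u ⬝ᵥ (S.R i *ᵥ u) := rfl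
  linarith

lemma gap_le_vd (hM : 0 < M) {Pund : Matrix (Fin n) (Fin n) ℝ} (hPund : Pund.PosSemidef)
    (hQ : ∀ i, (S.Q i).PosDef) (hR : ∀ i, (S.R i).PosDef)
    {Pbar : Matrix (Fin n) (Fin n) ℝ} {α₀ : ℝ}
    (hα₀Q : ∀ i : Fin M, (S.Q i - α₀ • (Pbar - Pund)).PosSemidef) (j : ℕ) (y : Fin n → ℝ) :
    α₀ * (y ⬝ᵥ (Pbar *ᵥ y) - y ⬝ᵥ (Pund *ᵥ y)) ≤ S.Vd Pund (j + 1) y := by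
  obtain ⟨i, hi⟩ := S.stage_le_vd hM hPund hQ hR j y
  have h := psd_nonneg (hα₀Q i) y
  rw [Matrix.sub_mulVec, dotProduct_sub, Matrix.smul_mulVec, dotProduct_smul,
    Matrix.sub_mulVec, dotProduct_sub, smul_eq_mul] at h
  linarith

lemma alphaW_le_Q {Pbar : Matrix (Fin n) (Fin n) ℝ} {α : ℝ}
    (hαQ : ∀ i : Fin M, (S.Q i - α • Pbar).PosSemidef) (i : Fin M) (y : Fin n → ℝ) :
    α * (y ⬝ᵥ (Pbar *ᵥ y)) ≤ y ⬝ᵥ (S.Q i *ᵥ y) := by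
  have h := psd_nonneg (hαQ i) y
  rw [Matrix.sub_mulVec, dotProduct_sub, Matrix.smul_mulVec, dotProduct_smul,
    smul_eq_mul] at h
  linarith

/-- Key relaxed-DP estimate: `V_{j+2} ≤ (1 + (1-α)^j/α₀) V_{j+1}`. -/
lemma key (hM : 0 < M) {Pund : Matrix (Fin n) (Fin n) ℝ} (hPund : Pund.PosSemidef)
    (hQ : ∀ i, (S.Q i).PosDef) (hR : ∀ i, (S.R i).PosDef) (hC : S.Cond1 Pund)
    {Pbar : Matrix (Fin n) (Fin n) ℝ} (hSA : S.SA1 Pbar)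
    {α : ℝ} (hα0 : 0 < α) (hα1 : α < 1)
    (hαQ : ∀ i : Fin M, (S.Q i - α • Pbar).PosSemidef)
    {α₀ : ℝ} (hα₀ : 0 < α₀)
    (hα₀Q : ∀ i : Fin M, (S.Q i - α₀ • (Pbar - Pund)).PosSemidef)
    {q : ℝ} (hq : 0 < q)
    (hqQ : ∀ (i : Fin M) (y : Fin n → ℝ), q * ∑ j, (y j) ^ 2 ≤ y ⬝ᵥ ((S.Q i) *ᵥ y))
    (j : ℕ) :
    ∀ y : Fin n → ℝ,
      S.Vd Pund (j + 2) y ≤ (1 + (1 - α) ^ j / α₀) * S.Vd Pund (j + 1) y := by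
  induction j with
  | zero =>
    intro y
    have h1 : S.Vd Pund 2 y ≤ y ⬝ᵥ (Pbar *ᵥ y) :=
      S.vd_le_W hM hPund hQ hR hC hSA hq hqQ 2 y
    have h2 := S.gap_le_vd hM hPund hQ hR hα₀Q 0 y
    have h3 : S.Vd Pund 0 y ≤ S.Vd Pund 1 y := S.vd_mono hM hPund hQ hR hC 0 y
    have h4 : S.Vd Pund 0 y = y ⬝ᵥ (Pund *ᵥ y) := S.vd_zero hM Pund y
    have h5 : α₀ * (y ⬝ᵥ (Pbar *ᵥ y) - y ⬝ᵥ (Pund *ᵥ y)) ≤ S.Vd Pund 1 y := h2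
    have h6 : y ⬝ᵥ (Pbar *ᵥ y) - y ⬝ᵥ (Pund *ᵥ y) ≤ S.Vd Pund 1 y / α₀ :=
      (le_div_iff₀ hα₀).mpr
        (by linarith [h5, mul_comm α₀ (y ⬝ᵥ (Pbar *ᵥ y) - y ⬝ᵥ (Pund *ᵥ y))])
    have h7 : (1 + (1 - α) ^ 0 / α₀) * S.Vd Pund 1 y
        = S.Vd Pund 1 y + S.Vd Pund 1 y / α₀ := by
      rw [pow_zero]; ring
    rw [h7]
    linarith
  | succ j ih =>
    intro y
    obtain ⟨u, i, h⟩ := S.dp_ex hM hPund hQ hR (j + 1) y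
    set y' := S.A i *ᵥ y + S.B i *ᵥ u with hy'
    have h2 : S.Vd Pund (j + 3) y ≤ S.ell y u i + S.Vd Pund (j + 2) y' :=
      S.dp_le hM hPund hQ hR (j + 2) y u i
    have hihy := ih y'
    -- ell ≥ α V_{j+2}(y)
    have hVW : S.Vd Pund (j + 2) y ≤ y ⬝ᵥ (Pbar *ᵥ y) :=
      S.vd_le_W hM hPund hQ hR hC hSA hq hqQ (j + 2) y
    have hαQ' := S.alphaW_le_Q hαQ i y
    have hRu := psd_nonneg (hR i).posSemidef u
    have hell : S.ell y u i = y ⬝ᵥ (S.Q i *ᵥ y) + u ⬝ᵥ (S.R i *ᵥ u) := rfl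
    have hellα : α * S.Vd Pund (j + 2) y ≤ S.ell y u i := by
      have := mul_le_mul_of_nonneg_left hVW (le_of_lt hα0)
      linarith
    have h3 : S.Vd Pund (j + 1) y' ≤ (1 - α) * S.Vd Pund (j + 2) y := by
      have : (1 - α) * S.Vd Pund (j + 2) y
          = S.Vd Pund (j + 2) y - α * S.Vd Pund (j + 2) y := by ring
      rw [this]
      linarith [h]
    have hc : (0:ℝ) ≤ (1 - α) ^ j / α₀ :=
      div_nonneg (pow_nonneg (by linarith) j) (le_of_lt hα₀)
    have h4 : ((1 - α) ^ j / α₀) * S.Vd Pund (j + 1) y'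
        ≤ ((1 - α) ^ j / α₀) * ((1 - α) * S.Vd Pund (j + 2) y) :=
      mul_le_mul_of_nonneg_left h3 hc
    calc S.Vd Pund (j + 3) y ≤ S.ell y u i + S.Vd Pund (j + 2) y' := h2
      _ ≤ S.ell y u i + (1 + (1 - α) ^ j / α₀) * S.Vd Pund (j + 1) y' := by linarith
      _ = (S.ell y u i + S.Vd Pund (j + 1) y') + ((1 - α) ^ j / α₀) * S.Vd Pund (j + 1) y' := by
          ring
      _ = S.Vd Pund (j + 2) y + ((1 - α) ^ j / α₀) * S.Vd Pund (j + 1) y' := by rw [← h]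
      _ ≤ S.Vd Pund (j + 2) y + ((1 - α) ^ j / α₀) * ((1 - α) * S.Vd Pund (j + 2) y) := by
          linarith
      _ = (1 + (1 - α) ^ (j + 1) / α₀) * S.Vd Pund (j + 2) y := by
          rw [pow_succ]; ring

end Key

end SwitchedLQR

/-- Theorem 1, global exponential stability of the closed loop:
under Condition 1 and SA1, with `α,α₀` as in eq. (8), if `d > 1` and
`(1-α)^{d-1} < α·α₀` (equivalently `d > max{1, log(α₀α)/log(1-α) + 1}`), then
`λ_d := 1 - α + (1-α)^{d-1}/α₀ ∈ (0,1)` and, with `q·|x|² ≤ xᵀQᵢx`,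
`xᵀP̄x ≤ L·|x|²` and `β := L/q`, every closed-loop solution of `F_d` satisfies
`|x_k|² ≤ β·λ_d^k·|x|²`. -/
theorem stmt15 {n m M : ℕ} (hn : 0 < n) (hm : 0 < m) (hM : 0 < M)
    (S : SwitchedLQR n m M)
    (hQ : ∀ i : Fin M, (S.Q i).PosDef) (hR : ∀ i : Fin M, (S.R i).PosDef)
    (Pund : Matrix (Fin n) (Fin n) ℝ) (hPund : Pund.PosSemidef)
    (hC : S.Cond1 Pund)
    (Pbar : Matrix (Fin n) (Fin n) ℝ) (hSA : S.SA1 Pbar)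
    (α : ℝ) (hα0 : 0 < α) (hα1 : α < 1)
    (hαQ : ∀ i : Fin M, (S.Q i - α • Pbar).PosSemidef)
    (α₀ : ℝ) (hα₀ : 0 < α₀)
    (hα₀Q : ∀ i : Fin M, (S.Q i - α₀ • (Pbar - Pund)).PosSemidef)
    (d : ℕ) (hd : 1 < d) (hdα : (1 - α) ^ (d - 1) < α * α₀)
    (lam : ℝ) (hlam : lam = 1 - α + (1 - α) ^ (d - 1) / α₀)
    (q L : ℝ) (hq : 0 < q) (hL : 0 < L)
    (hqQ : ∀ (i : Fin M) (y : Fin n → ℝ), q * ∑ j, (y j) ^ 2 ≤ y ⬝ᵥ ((S.Q i) *ᵥ y))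
    (hLP : ∀ y : Fin n → ℝ, y ⬝ᵥ (Pbar *ᵥ y) ≤ L * ∑ j, (y j) ^ 2)
    (β : ℝ) (hβ : β = L / q)
    (x : Fin n → ℝ) (xs : ℕ → Fin n → ℝ) (hx0 : xs 0 = x)
    (hstep : ∀ k : ℕ, xs (k + 1) ∈ S.Fd Pund d (xs k)) :
    (0 < lam ∧ lam < 1) ∧
    ∀ k : ℕ, (∑ j, (xs k j) ^ 2) ≤ β * lam ^ k * ∑ j, (x j) ^ 2 := by
  -- basic positivity facts
  have h1α : (0:ℝ) < 1 - α := by linarith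
  have hpow : (0:ℝ) < (1 - α) ^ (d - 1) := pow_pos h1α _
  have hlam_pos : 0 < lam := by
    rw [hlam]
    have := div_pos hpow hα₀
    linarith
  have hlam_lt1 : lam < 1 := by
    rw [hlam]
    have h2 : (1 - α) ^ (d - 1) / α₀ < α := (div_lt_iff₀ hα₀).mpr (by linarith [hdα])
    linarith
  refine ⟨⟨hlam_pos, hlam_lt1⟩, ?_⟩
  obtain ⟨e, rfl⟩ : ∃ e, d = e + 2 := ⟨d - 2, by omega⟩
  have hd1 : e + 2 - 1 = e + 1 := rfl
  -- one-step decay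
  have step : ∀ (y y' : Fin n → ℝ), y' ∈ S.Fd Pund (e + 2) y →
      S.Vd Pund (e + 2) y' ≤ lam * S.Vd Pund (e + 2) y := by
    rintro y y' ⟨⟨u, i⟩, hH, rfl⟩
    have hH' : S.Vd Pund (e + 2) y
        = S.ell y u i + S.Vd Pund (e + 1) (S.A i *ᵥ y + S.B i *ᵥ u) := hH
    set y' := S.A i *ᵥ y + S.B i *ᵥ u with hy'
    have hkey := S.key hM hPund hQ hR hC hSA hα0 hα1 hαQ hα₀ hα₀Q hq hqQ e y'
    -- ℓ ≥ α V_{e+2}(y)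
    have hVW : S.Vd Pund (e + 2) y ≤ y ⬝ᵥ (Pbar *ᵥ y) :=
      S.vd_le_W hM hPund hQ hR hC hSA hq hqQ (e + 2) y
    have hαQ' := S.alphaW_le_Q hαQ i y
    have hRu := SwitchedLQR.psd_nonneg (hR i).posSemidef u
    have hell : S.ell y u i = y ⬝ᵥ (S.Q i *ᵥ y) + u ⬝ᵥ (S.R i *ᵥ u) := rfl
    have hellα : α * S.Vd Pund (e + 2) y ≤ S.ell y u i := by
      have := mul_le_mul_of_nonneg_left hVW (le_of_lt hα0)
      linarith
    have h3 : S.Vd Pund (e + 1) y' ≤ (1 - α) * S.Vd Pund (e + 2) y := by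
      have hrs : (1 - α) * S.Vd Pund (e + 2) y
          = S.Vd Pund (e + 2) y - α * S.Vd Pund (e + 2) y := by ring
      rw [hrs]
      linarith [hH']
    have hc : (0:ℝ) ≤ 1 + (1 - α) ^ e / α₀ := by
      have : (0:ℝ) ≤ (1 - α) ^ e / α₀ :=
        div_nonneg (pow_nonneg (by linarith) e) (le_of_lt hα₀)
      linarith
    calc S.Vd Pund (e + 2) y' ≤ (1 + (1 - α) ^ e / α₀) * S.Vd Pund (e + 1) y' := hkey
      _ ≤ (1 + (1 - α) ^ e / α₀) * ((1 - α) * S.Vd Pund (e + 2) y) :=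
          mul_le_mul_of_nonneg_left h3 hc
      _ = lam * S.Vd Pund (e + 2) y := by
          rw [hlam]
          have : e + 2 - 1 = e + 1 := rfl
          rw [this, pow_succ]
          ring
  -- iterate
  have decayV : ∀ k : ℕ, S.Vd Pund (e + 2) (xs k) ≤ lam ^ k * S.Vd Pund (e + 2) x := by
    intro k
    induction k with
    | zero => rw [hx0, pow_zero, one_mul]
    | succ k ih =>
      have h1 := step (xs k) (xs (k + 1)) (hstep k)
      have h2 : lam * S.Vd Pund (e + 2) (xs k) ≤ lam * (lam ^ k * S.Vd Pund (e + 2) x) :=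
        mul_le_mul_of_nonneg_left ih (le_of_lt hlam_pos)
      calc S.Vd Pund (e + 2) (xs (k + 1)) ≤ lam * S.Vd Pund (e + 2) (xs k) := h1
        _ ≤ lam * (lam ^ k * S.Vd Pund (e + 2) x) := h2
        _ = lam ^ (k + 1) * S.Vd Pund (e + 2) x := by rw [pow_succ]; ring
  -- conclude
  intro k
  obtain ⟨i, hi⟩ := S.stage_le_vd hM hPund hQ hR (e + 1) (xs k)
  have hlow : q * ∑ j, (xs k j) ^ 2 ≤ S.Vd Pund (e + 2) (xs k) :=
    le_trans (hqQ i (xs k)) hi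
  have hupp : S.Vd Pund (e + 2) x ≤ L * ∑ j, (x j) ^ 2 :=
    le_trans (S.vd_le_W hM hPund hQ hR hC hSA hq hqQ (e + 2) x) (hLP x)
  have hlk : (0:ℝ) ≤ lam ^ k := pow_nonneg (le_of_lt hlam_pos) k
  have h5 : lam ^ k * S.Vd Pund (e + 2) x ≤ lam ^ k * (L * ∑ j, (x j) ^ 2) :=
    mul_le_mul_of_nonneg_left hupp hlk
  have h6 := decayV k
  have h7 : β * lam ^ k * (∑ j, (x j) ^ 2) = (lam ^ k * (L * ∑ j, (x j) ^ 2)) / q := by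
    rw [hβ]; field_simp
  rw [h7, le_div_iff₀ hq]
  nlinarith [h5, h6, hlow]
end

section
/- (Correctness certificate for best-first exploration, core of Proposition 4.) Under Condition 1, let d ∈ ℕ, x ∈ ℝⁿ, and let T be a finite set of finite mode sequences (lists with entries in 𝕄) such that every mode sequence of length d has a prefix (possibly itself) belonging to T. Suppose s ∈ T has length d and xᵀP_sx ≤ xᵀP_tx for every t ∈ T. Then xᵀP_sx = V*_d(x), i.e., s attains the minimum of xᵀP_𝐢x over all length-d mode sequences 𝐢. -/
open Matrix Filter
open scoped ENNReal

namespace Stmt18Aux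

open Matrix

variable {n m M : ℕ}

lemma psd_conj {a b : ℕ} {P : Matrix (Fin a) (Fin a) ℝ} (hP : P.PosSemidef)
    (X : Matrix (Fin a) (Fin b) ℝ) : (Xᵀ * P * X).PosSemidef := by
  have := hP.conjTranspose_mul_mul_same X
  rwa [Matrix.conjTranspose_eq_transpose_of_trivial] at this

lemma psd_dot {a : ℕ} {D : Matrix (Fin a) (Fin a) ℝ} (hD : D.PosSemidef) (x : Fin a → ℝ) :
    0 ≤ x ⬝ᵥ (D *ᵥ x) := by
  simpa using hD.dotProduct_mulVec_nonneg x

lemma quad_identity (A P Q : Matrix (Fin n) (Fin n) ℝ) (B : Matrix (Fin n) (Fin m) ℝ)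
    (R W : Matrix (Fin m) (Fin m) ℝ) (G L : Matrix (Fin m) (Fin n) ℝ)
    (hG : G = Bᵀ * P * A) (hGt : Gᵀ = Aᵀ * P * B)
    (hWL : W * L = G) (hLW : Lᵀ * W = Gᵀ) (hW : W = R + Bᵀ * P * B)
    (K : Matrix (Fin m) (Fin n) ℝ) :
    (Q + (A + B * K)ᵀ * P * (A + B * K) + Kᵀ * R * K)
      - (Q + Aᵀ * P * A - Aᵀ * P * B * L) = (K + L)ᵀ * W * (K + L) := by
  have hGL : Gᵀ * L = Lᵀ * G := by
    conv_rhs => rw [← hWL, ← Matrix.mul_assoc, hLW]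
  have h1 : (K + L)ᵀ * W * (K + L)
      = Kᵀ * W * K + Kᵀ * (W * L) + Lᵀ * W * K + Lᵀ * (W * L) := by
    simp only [Matrix.transpose_add, Matrix.add_mul, Matrix.mul_add, Matrix.mul_assoc]; abel
  rw [h1, hWL, hLW, hW, ← hGL, hGt, hG]
  simp only [Matrix.transpose_add, Matrix.transpose_mul, Matrix.add_mul, Matrix.mul_add,
    Matrix.mul_assoc]
  abel

/-- The "closed-loop cost" matrix `F(P,K)`. -/
noncomputable def FF (S : SwitchedLQR n m M) (i : Fin M) (P : Matrix (Fin n) (Fin n) ℝ)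
    (K : Matrix (Fin m) (Fin n) ℝ) : Matrix (Fin n) (Fin n) ℝ :=
  S.Q i + (S.A i + S.B i * K)ᵀ * P * (S.A i + S.B i * K) + Kᵀ * S.R i * K

lemma W_pd (S : SwitchedLQR n m M) (hR : ∀ i : Fin M, (S.R i).PosDef) (i : Fin M)
    {P : Matrix (Fin n) (Fin n) ℝ} (hP : P.PosSemidef) :
    (S.R i + (S.B i)ᵀ * P * S.B i).PosDef :=
  (hR i).add_posSemidef (psd_conj hP (S.B i))

lemma sym_of_psd {a : ℕ} {P : Matrix (Fin a) (Fin a) ℝ} (hP : P.IsHermitian) : Pᵀ = P := by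
  rwa [Matrix.IsHermitian, Matrix.conjTranspose_eq_transpose_of_trivial] at hP

lemma ric_core (S : SwitchedLQR n m M) (hR : ∀ i : Fin M, (S.R i).PosDef) (i : Fin M)
    {P : Matrix (Fin n) (Fin n) ℝ} (hP : P.PosSemidef) :
    ∀ K, (FF S i P K - S.Ric i P).PosSemidef ∧
      (K = -((S.R i + (S.B i)ᵀ * P * S.B i)⁻¹ * ((S.B i)ᵀ * P * S.A i)) →
        S.Ric i P = FF S i P K) := by
  set W : Matrix (Fin m) (Fin m) ℝ := S.R i + (S.B i)ᵀ * P * S.B i with hW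
  set G : Matrix (Fin m) (Fin n) ℝ := (S.B i)ᵀ * P * S.A i with hG
  set L : Matrix (Fin m) (Fin n) ℝ := W⁻¹ * G with hL
  have hWpd : W.PosDef := W_pd S hR i hP
  have hdet : IsUnit W.det := hWpd.det_pos.ne'.isUnit
  have hPt : Pᵀ = P := sym_of_psd hP.isHermitian
  have hGt : Gᵀ = (S.A i)ᵀ * P * S.B i := by
    rw [hG]; simp [Matrix.transpose_mul, hPt, Matrix.mul_assoc]
  have hWt : Wᵀ = W := sym_of_psd hWpd.isHermitian
  have hWL : W * L = G := by
    rw [hL, ← Matrix.mul_assoc, Matrix.mul_nonsing_inv _ hdet, Matrix.one_mul]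
  have hLW : Lᵀ * W = Gᵀ := by
    rw [hL, Matrix.transpose_mul, Matrix.transpose_nonsing_inv, hWt, Matrix.mul_assoc,
      Matrix.nonsing_inv_mul _ hdet, Matrix.mul_one]
  have hric : S.Ric i P = S.Q i + (S.A i)ᵀ * P * S.A i - (S.A i)ᵀ * P * S.B i * L := by
    rw [SwitchedLQR.Ric, hL, hG, hW]
    simp only [Matrix.mul_assoc]
  intro K
  have hid := quad_identity (S.A i) P (S.Q i) (S.B i) (S.R i) W G L hG hGt hWL hLW hW K
  rw [← hric] at hid
  constructor
  · rw [show FF S i P K - S.Ric i P = (K + L)ᵀ * W * (K + L) from hid]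
    exact psd_conj hWpd.posSemidef (K + L)
  · intro hK
    have hKL : K + L = 0 := by rw [hK, hL, hG, hW]; simp
    rw [hKL] at hid
    simp only [Matrix.transpose_zero, Matrix.zero_mul, Matrix.mul_zero] at hid
    rw [sub_eq_zero] at hid
    exact hid.symm

lemma ric_le_FF (S : SwitchedLQR n m M) (hR : ∀ i : Fin M, (S.R i).PosDef) (i : Fin M)
    {P : Matrix (Fin n) (Fin n) ℝ} (hP : P.PosSemidef) (K : Matrix (Fin m) (Fin n) ℝ) :
    (FF S i P K - S.Ric i P).PosSemidef :=
  (ric_core S hR i hP K).1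

lemma ric_eq_FF (S : SwitchedLQR n m M) (hR : ∀ i : Fin M, (S.R i).PosDef) (i : Fin M)
    {P : Matrix (Fin n) (Fin n) ℝ} (hP : P.PosSemidef) : ∃ K, S.Ric i P = FF S i P K :=
  ⟨_, (ric_core S hR i hP _).2 rfl⟩

lemma FF_mono (S : SwitchedLQR n m M) (i : Fin M) {P₁ P₂ : Matrix (Fin n) (Fin n) ℝ}
    (h : (P₂ - P₁).PosSemidef) (K : Matrix (Fin m) (Fin n) ℝ) :
    (FF S i P₂ K - FF S i P₁ K).PosSemidef := by
  have e : FF S i P₂ K - FF S i P₁ K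
      = (S.A i + S.B i * K)ᵀ * (P₂ - P₁) * (S.A i + S.B i * K) := by
    simp only [FF, Matrix.mul_sub, Matrix.sub_mul]; abel
  rw [e]; exact psd_conj h _

lemma ric_mono (S : SwitchedLQR n m M) (hR : ∀ i : Fin M, (S.R i).PosDef) (i : Fin M)
    {P₁ P₂ : Matrix (Fin n) (Fin n) ℝ} (hP₁ : P₁.PosSemidef) (hP₂ : P₂.PosSemidef)
    (h : (P₂ - P₁).PosSemidef) : (S.Ric i P₂ - S.Ric i P₁).PosSemidef := by
  obtain ⟨K, hK⟩ := ric_eq_FF S hR i hP₂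
  have h1 := ric_le_FF S hR i hP₁ K
  have h2 := FF_mono S i h K
  have e : S.Ric i P₂ - S.Ric i P₁
      = (FF S i P₂ K - FF S i P₁ K) + (FF S i P₁ K - S.Ric i P₁) := by rw [hK]; abel
  rw [e]; exact h2.add h1

lemma ric_psd (S : SwitchedLQR n m M) (hQ : ∀ i : Fin M, (S.Q i).PosDef)
    (hR : ∀ i : Fin M, (S.R i).PosDef) (i : Fin M)
    {P : Matrix (Fin n) (Fin n) ℝ} (hP : P.PosSemidef) : (S.Ric i P).PosSemidef := by
  obtain ⟨K, hK⟩ := ric_eq_FF S hR i hP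
  rw [hK]
  exact ((hQ i).posSemidef.add (psd_conj hP _)).add (psd_conj (hR i).posSemidef K)

lemma ric_ge_pund (S : SwitchedLQR n m M) (hR : ∀ i : Fin M, (S.R i).PosDef)
    {Pund : Matrix (Fin n) (Fin n) ℝ} (hPund : Pund.PosSemidef) (hC : S.Cond1 Pund)
    (i : Fin M) : (S.Ric i Pund - Pund).PosSemidef := by
  have hWpd : (S.R i + (S.B i)ᵀ * Pund * S.B i).PosDef := W_pd S hR i hPund
  haveI : Invertible (S.R i + (S.B i)ᵀ * Pund * S.B i) :=
    Matrix.invertibleOfIsUnitDet _ hWpd.det_pos.ne'.isUnit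
  have hPt : Pundᵀ = Pund := sym_of_psd hPund.isHermitian
  have hBt : ((S.A i)ᵀ * Pund * S.B i)ᴴ = (S.B i)ᵀ * Pund * S.A i := by
    rw [Matrix.conjTranspose_eq_transpose_of_trivial]
    simp [Matrix.transpose_mul, hPt, Matrix.mul_assoc]
  have hC' := hC i
  rw [← hBt] at hC'
  have key := (Matrix.PosDef.fromBlocks₂₂ _ _ hWpd).mp hC'
  rw [hBt] at key
  have e : S.Ric i Pund - Pund
      = ((S.A i)ᵀ * Pund * S.A i - Pund + S.Q i)
        - (S.A i)ᵀ * Pund * S.B i * (S.R i + (S.B i)ᵀ * Pund * S.B i)⁻¹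
            * ((S.B i)ᵀ * Pund * S.A i) := by
    rw [SwitchedLQR.Ric]; abel
  rw [e]; exact key

lemma pseq_psd_and_ge (S : SwitchedLQR n m M) (hQ : ∀ i : Fin M, (S.Q i).PosDef)
    (hR : ∀ i : Fin M, (S.R i).PosDef) {Pund : Matrix (Fin n) (Fin n) ℝ}
    (hPund : Pund.PosSemidef) (hC : S.Cond1 Pund) :
    ∀ l : List (Fin M), (S.Pseq Pund l).PosSemidef ∧ (S.Pseq Pund l - Pund).PosSemidef := by
  intro l
  induction l with
  | nil =>
    refine ⟨hPund, ?_⟩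
    rw [show S.Pseq Pund [] = Pund from rfl, sub_self]
    exact Matrix.PosSemidef.zero
  | cons i t ih =>
    have h1 : S.Pseq Pund (i :: t) = S.Ric i (S.Pseq Pund t) := rfl
    refine ⟨h1 ▸ ric_psd S hQ hR i ih.1, ?_⟩
    have h2 := ric_mono S hR i hPund ih.1 ih.2
    have h3 := ric_ge_pund S hR hPund hC i
    have e : S.Pseq Pund (i :: t) - Pund
        = (S.Ric i (S.Pseq Pund t) - S.Ric i Pund) + (S.Ric i Pund - Pund) := by
      rw [h1]; abel
    rw [e]; exact h2.add h3

lemma pseq_prefix_le (S : SwitchedLQR n m M) (hQ : ∀ i : Fin M, (S.Q i).PosDef)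
    (hR : ∀ i : Fin M, (S.R i).PosDef) {Pund : Matrix (Fin n) (Fin n) ℝ}
    (hPund : Pund.PosSemidef) (hC : S.Cond1 Pund) (t r : List (Fin M)) :
    (S.Pseq Pund (t ++ r) - S.Pseq Pund t).PosSemidef := by
  induction t with
  | nil => simpa [SwitchedLQR.Pseq] using (pseq_psd_and_ge S hQ hR hPund hC r).2
  | cons i t ih =>
    have h1 : S.Pseq Pund (i :: t ++ r) = S.Ric i (S.Pseq Pund (t ++ r)) := rfl
    have h2 : S.Pseq Pund (i :: t) = S.Ric i (S.Pseq Pund t) := rfl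
    rw [h1, h2]
    exact ric_mono S hR i (pseq_psd_and_ge S hQ hR hPund hC t).1
      (pseq_psd_and_ge S hQ hR hPund hC (t ++ r)).1 ih

end Stmt18Aux

/-- correctness certificate for best-first exploration, core of
Proposition 4: under Condition 1, if `T` is a finite set of mode sequences such
that every length-`d` sequence has a prefix in `T`, and `s ∈ T` has length `d`
and minimizes `xᵀP_tx` over `t ∈ T`, then `xᵀP_sx = V*_d(x)`, i.e. `s` attains
the minimum of `xᵀP_𝐢x` over all length-`d` sequences. -/
theorem stmt18 {n m M : ℕ} (hn : 0 < n) (hm : 0 < m) (hM : 0 < M)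
    (S : SwitchedLQR n m M)
    (hQ : ∀ i : Fin M, (S.Q i).PosDef) (hR : ∀ i : Fin M, (S.R i).PosDef)
    (Pund : Matrix (Fin n) (Fin n) ℝ) (hPund : Pund.PosSemidef)
    (hC : S.Cond1 Pund)
    (d : ℕ) (x : Fin n → ℝ) (T : Finset (List (Fin M)))
    (hcover : ∀ l : List (Fin M), l.length = d → ∃ t ∈ T, t <+: l)
    (s : List (Fin M)) (hsT : s ∈ T) (hs : s.length = d)
    (hmin : ∀ t ∈ T, x ⬝ᵥ ((S.Pseq Pund s) *ᵥ x) ≤ x ⬝ᵥ ((S.Pseq Pund t) *ᵥ x)) :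
    x ⬝ᵥ ((S.Pseq Pund s) *ᵥ x) = S.Vd Pund d x ∧
    ∀ l : List (Fin M), l.length = d →
      x ⬝ᵥ ((S.Pseq Pund s) *ᵥ x) ≤ x ⬝ᵥ ((S.Pseq Pund l) *ᵥ x) := by
  have part2 : ∀ l : List (Fin M), l.length = d →
      x ⬝ᵥ ((S.Pseq Pund s) *ᵥ x) ≤ x ⬝ᵥ ((S.Pseq Pund l) *ᵥ x) := by
    intro l hl
    obtain ⟨t, htT, ⟨r, rfl⟩⟩ := hcover l hl
    refine (hmin t htT).trans ?_
    have h := Stmt18Aux.psd_dot (Stmt18Aux.pseq_prefix_le S hQ hR hPund hC t r) x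
    rw [Matrix.sub_mulVec, dotProduct_sub, sub_nonneg] at h
    exact h
  refine ⟨?_, part2⟩
  have hmem : x ⬝ᵥ ((S.Pseq Pund s) *ᵥ x)
      ∈ {r : ℝ | ∃ l : List (Fin M), l.length = d ∧ r = x ⬝ᵥ ((S.Pseq Pund l) *ᵥ x)} :=
    ⟨s, hs, rfl⟩
  have hlb : ∀ r ∈ {r : ℝ | ∃ l : List (Fin M), l.length = d ∧
      r = x ⬝ᵥ ((S.Pseq Pund l) *ᵥ x)}, x ⬝ᵥ ((S.Pseq Pund s) *ᵥ x) ≤ r := by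
    rintro r ⟨l, hl, rfl⟩
    exact part2 l hl
  exact le_antisymm (le_csInf ⟨_, hmem⟩ hlb) (csInf_le ⟨_, hlb⟩ hmem)
end
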